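/- arXiv:0706.3249 — 4 statements merged into one kernel-verified Lean document; each statement's English description precedes it below -/
import Mathlib

section
/- Let T be an amenable tableau whose content is (k, k−1, k−2, …, k−j), i.e. c_i(T) = k+1−i for 1 ≤ i ≤ j+1 and c_i(T) = 0 for i > j+1, where k > j ≥ 1. Then for every 1 ≤ i ≤ j, the number of marked letters i' appearing in T is at most the number of marked letters (i+1)' appearing in T. -/
/-!
Letters of the marked alphabet 1′ < 1 < 2′ < 2 < 3′ < 3 < ⋯ are encoded as
positive natural numbers: `2 * i - 1` encodes the marked letter i′ and `2 * i`
encodes the unmarked letter i.  The successor in the alphabet is then `· + 1`,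
and the (unmarked) value of a letter `t` is `(t + 1) / 2`.
-/

/-- `l` is (the list of parts of) a partition: weakly decreasing positive parts. -/
def IsPartitionList (l : List ℕ) : Prop :=
  l.Pairwise (· ≥ ·) ∧ ∀ x ∈ l, 0 < x

/-- `l` is a strict partition: strictly decreasing positive parts. -/
def IsStrictPartitionList (l : List ℕ) : Prop :=
  l.Pairwise (· > ·) ∧ ∀ x ∈ l, 0 < x

/-- The cells of a row-convex diagram with rows `0, …, nrows - 1`, where row `r`
occupies the columns `c` with `lo r ≤ c < hi r`.  (For the Young diagram of a
partition `μ` take `lo r = 0`, `hi r = μ_(r+1)`; for the shifted skew diagram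
`λ/μ` take `lo r = r + μ_(r+1)`, `hi r = r + λ_(r+1)`.)  Rows and columns are
0-indexed. -/
def InDiagram (nrows : ℕ) (lo hi : ℕ → ℕ) (p : ℕ × ℕ) : Prop :=
  p.1 < nrows ∧ lo p.1 ≤ p.2 ∧ p.2 < hi p.1

/-- The reading word of a filling `T`: entries read right to left along each
row, rows top to bottom. -/
def readingWord (nrows : ℕ) (lo hi : ℕ → ℕ) (T : ℕ × ℕ → ℕ) : List ℕ :=
  (List.range nrows).flatMap fun r =>
    ((List.range' (lo r) (hi r - lo r)).reverse).map fun c => T (r, c)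

/-- The augmented reverse reading word: the reading word read backwards, with
every entry increased by one step in the alphabet order. -/
def augWord (nrows : ℕ) (lo hi : ℕ → ℕ) (T : ℕ × ℕ → ℕ) : List ℕ :=
  ((readingWord nrows lo hi T).reverse).map (· + 1)

/-- A word in the marked alphabet is lattice if, reading it from the left,
whenever the number of unmarked i's read so far equals the number of unmarked
(i+1)'s read so far, the next letter is neither (i+1) (encoded `2*(i+1)`)
nor (i+1)′ (encoded `2*(i+1) - 1 = 2*i + 1`). -/
def IsLatticeWord (w : List ℕ) : Prop :=
  ∀ (p : List ℕ) (x : ℕ), p ++ [x] <+: w → ∀ i : ℕ, 1 ≤ i →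
    p.count (2 * i) = p.count (2 * (i + 1)) →
      x ≠ 2 * (i + 1) ∧ x ≠ 2 * i + 1

/-- `T` is an amenable filling of the diagram determined by `nrows`, `lo`, `hi`:
it is a genuine filling of the diagram by letters (positive inside, `0` outside),
rows and columns weakly increase, each row has at most one i′ for each i,
each column has at most one unmarked i for each i, the concatenation of the
reading word and the augmented reverse reading word is lattice, and every
occurrence of i′ in the reading word has an occurrence of i strictly later
(i.e. the rightmost i is to the right of the rightmost i′). -/
def IsAmenable (nrows : ℕ) (lo hi : ℕ → ℕ) (T : ℕ × ℕ → ℕ) : Prop :=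
  (∀ p, InDiagram nrows lo hi p → 1 ≤ T p) ∧
  (∀ p, ¬ InDiagram nrows lo hi p → T p = 0) ∧
  (∀ r c, InDiagram nrows lo hi (r, c) → InDiagram nrows lo hi (r, c + 1) →
      T (r, c) ≤ T (r, c + 1)) ∧
  (∀ r c, InDiagram nrows lo hi (r, c) → InDiagram nrows lo hi (r + 1, c) →
      T (r, c) ≤ T (r + 1, c)) ∧
  (∀ r c₁ c₂, ∀ i : ℕ, 1 ≤ i → c₁ ≠ c₂ → InDiagram nrows lo hi (r, c₁) →
      InDiagram nrows lo hi (r, c₂) →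
      ¬ (T (r, c₁) = 2 * i - 1 ∧ T (r, c₂) = 2 * i - 1)) ∧
  (∀ r₁ r₂ c, ∀ i : ℕ, 1 ≤ i → r₁ ≠ r₂ → InDiagram nrows lo hi (r₁, c) →
      InDiagram nrows lo hi (r₂, c) →
      ¬ (T (r₁, c) = 2 * i ∧ T (r₂, c) = 2 * i)) ∧
  IsLatticeWord (readingWord nrows lo hi T ++ augWord nrows lo hi T) ∧
  (∀ i : ℕ, 1 ≤ i → ∀ p : ℕ, (readingWord nrows lo hi T)[p]? = some (2 * i - 1) →
      ∃ q : ℕ, p < q ∧ (readingWord nrows lo hi T)[q]? = some (2 * i))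

/-- The number of entries of a word equal to i or i′. -/
def contentAt (w : List ℕ) (i : ℕ) : ℕ :=
  w.count (2 * i) + w.count (2 * i - 1)

/-- The filling `T` has content `lam`: for every `i ≥ 1` the number of entries
equal to i or i′ is the i-th part of `lam` (0 beyond the length of `lam`). -/
def HasContent (nrows : ℕ) (lo hi : ℕ → ℕ) (T : ℕ × ℕ → ℕ) (lam : List ℕ) : Prop :=
  ∀ i : ℕ, 1 ≤ i → contentAt (readingWord nrows lo hi T) i = lam.getD (i - 1) 0

/-- The amenable tableaux of (straight) shape `mu` and content `lam`. -/
def gSet (lam mu : List ℕ) : Set (ℕ × ℕ → ℕ) :=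
  {T | IsAmenable mu.length (fun _ => 0) (fun r => mu.getD r 0) T ∧
       HasContent mu.length (fun _ => 0) (fun r => mu.getD r 0) T lam}

/-- The Stembridge coefficient `g_{λμ}`: the number of amenable tableaux of
shape `mu` and content `lam`. -/
noncomputable def gCoeff (lam mu : List ℕ) : ℕ := (gSet lam mu).ncard

/-- The amenable shifted skew tableaux of shape `lam/mu` and content `nu`. -/
def fSet (lam mu nu : List ℕ) : Set (ℕ × ℕ → ℕ) :=
  {T | IsAmenable lam.length (fun r => r + mu.getD r 0) (fun r => r + lam.getD r 0) T ∧
       HasContent lam.length (fun r => r + mu.getD r 0) (fun r => r + lam.getD r 0) T nu}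

/-- The coefficient `f^λ_{μν}`: the number of amenable shifted skew tableaux of
shape `λ/μ` and content `ν` (this is `0` when `S(μ) ⊄ S(λ)`). -/
noncomputable def fCoeff (lam mu nu : List ℕ) : ℕ := (fSet lam mu nu).ncard

/-- The staircase `(k, k-1, …, 2, 1)` of length `k`. -/
def staircase (k : ℕ) : List ℕ := (List.range k).map fun i => k - i

/-- `μ + 1^r`: add 1 to each of the first `r` parts of `μ` (creating new parts
equal to 1 if `r` exceeds the length of `μ`). -/
def addOnes (r : ℕ) (mu : List ℕ) : List ℕ :=
  (List.range (max mu.length r)).map fun i => mu.getD i 0 + (if i < r then 1 else 0)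

/-- `μ ∪ s`: insert `s` as a new part, re-sorting into weakly decreasing order. -/
def insertPart (mu : List ℕ) (s : ℕ) : List ℕ :=
  mu.takeWhile (fun x => decide (s ≤ x)) ++ s :: mu.dropWhile (fun x => decide (s ≤ x))

/-- The conjugate partition `μ′`. -/
def conjugatePartition (mu : List ℕ) : List ℕ :=
  (List.range (mu.getD 0 0)).map fun j => mu.countP fun x => decide (j < x)

/-- A near staircase: a strict partition of the form `ρ + 1^r` with `1 ≤ r ≤ k`
or `ρ ∪ r` with `r ≥ k + 1`, where `ρ` is the staircase of length `k`. -/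
def NearStaircase (lam : List ℕ) : Prop :=
  (∃ k r : ℕ, 1 ≤ r ∧ r ≤ k ∧ lam = addOnes r (staircase k)) ∨
  (∃ k r : ℕ, k + 1 ≤ r ∧ lam = r :: staircase k)

/-- No occurrence of `a` strictly before `l.idxOf a`. -/
lemma aux_not_getElem_lt_indexOf {l : List ℕ} {a : ℕ} {s : ℕ} (hs : s < l.idxOf a)
    (h : s < l.length) : l[s] ≠ a := by
  intro h'
  have hmem : a ∈ l.take (s + 1) :=
    List.mem_take_iff_getElem.mpr ⟨s, by simp; omega, h'⟩
  have h1 : l.idxOf a = (l.take (s + 1)).idxOf a := by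
    conv_lhs => rw [← List.take_append_drop (s + 1) l]
    exact List.idxOf_append_of_mem hmem
  have h2 : (l.take (s + 1)).idxOf a < (l.take (s + 1)).length :=
    List.idxOf_lt_length_iff.mpr hmem
  have h3 : (l.take (s + 1)).length ≤ s + 1 := by simp
  omega

/-- Prefix monotonicity for lattice words: every prefix has at least as many
unmarked i's as unmarked (i+1)'s. -/
lemma aux_lattice_count_le {W : List ℕ} (hL : IsLatticeWord W) {i : ℕ} (hi : 1 ≤ i) :
    ∀ n, (W.take n).count (2 * (i + 1)) ≤ (W.take n).count (2 * i) := by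
  intro n
  induction n with
  | zero => simp
  | succ n ih =>
    rcases Nat.lt_or_ge n W.length with h | h
    · have hx : W.take (n + 1) = W.take n ++ [W[n]] := by
        rw [List.take_succ, List.getElem?_eq_getElem h]; rfl
      rw [hx, List.count_append, List.count_append]
      rcases eq_or_lt_of_le ih with he | hlt
      · have hne := hL (W.take n) W[n] (by rw [← hx]; exact List.take_prefix _ _) i hi he.symm
        have hz : List.count (2 * (i + 1)) [W[n]] = 0 := by
          simp [List.count_singleton]
          intro hc; exact absurd hc hne.1
        have hc2 : List.count (2 * i) [W[n]] ≤ 1 := by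
          have := List.count_le_length (a := 2 * i) (l := [W[n]])
          simpa using this
        omega
      · have h1 : List.count (2 * (i + 1)) [W[n]] ≤ 1 := by
          have := List.count_le_length (a := 2 * (i + 1)) (l := [W[n]])
          simpa using this
        omega
    · rw [List.take_of_length_le (by omega)]
      rw [List.take_of_length_le (by omega)] at ih
      exact ih


/-- Lemma 1.5 (increasing primes): if `T` is an amenable tableau with content
`(k, k-1, …, k-j)` where `k > j ≥ 1`, then for `1 ≤ i ≤ j` the number of
marked letters i′ (encoded `2*i - 1`) in the reading word is at most the
number of marked letters (i+1)′ (encoded `2*(i+1) - 1`). -/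
theorem amenable_increasing_primes (μ : List ℕ) (T : ℕ × ℕ → ℕ) (k j : ℕ)
    (hμ : IsPartitionList μ) (hj : 1 ≤ j) (hjk : j < k)
    (hT : IsAmenable μ.length (fun _ => 0) (fun r => μ.getD r 0) T)
    (hc : HasContent μ.length (fun _ => 0) (fun r => μ.getD r 0) T
      ((List.range (j + 1)).map fun i => k - i)) :
    ∀ i : ℕ, 1 ≤ i → i ≤ j →
      (readingWord μ.length (fun _ => 0) (fun r => μ.getD r 0) T).count (2 * i - 1) ≤
      (readingWord μ.length (fun _ => 0) (fun r => μ.getD r 0) T).count (2 * (i + 1) - 1) := by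
  intro i hi hij
  set w := readingWord μ.length (fun _ => 0) (fun r => μ.getD r 0) T with hw
  obtain ⟨-, -, -, -, -, -, hL, h8⟩ := hT
  clear_value w
  rw [← hw] at hL h8
  -- content equations
  have hci : w.count (2 * i) + w.count (2 * i - 1) = k - (i - 1) := by
    have := hc i hi
    rw [← hw] at this
    rw [contentAt] at this
    rwa [List.getD_eq_getElem?_getD, List.getElem?_map, List.getElem?_range (by omega : i - 1 < j + 1)] at this
  have hci1 : w.count (2 * (i + 1)) + w.count (2 * (i + 1) - 1) = k - i := by
    have := hc (i + 1) (by omega)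
    rw [← hw] at this
    rw [contentAt] at this
    rwa [List.getD_eq_getElem?_getD, List.getElem?_map,
      (by simpa using List.getElem?_range (by omega : i < j + 1) : (List.range (j+1))[i+1-1]? = some i)] at this
  rcases Nat.eq_zero_or_pos (w.count (2 * i - 1)) with hm0 | hmpos
  · omega
  -- there is an unmarked i in w
  have hmem2i : (2 * i) ∈ w := by
    have hmem : (2 * i - 1) ∈ w := List.count_pos_iff.mp hmpos
    obtain ⟨p, hp, hpe⟩ := List.getElem_of_mem hmem
    obtain ⟨q, -, hq⟩ := h8 i hi p (by rw [List.getElem?_eq_getElem hp, hpe])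
    obtain ⟨hq1, hq2⟩ := List.getElem?_eq_some_iff.mp hq
    exact hq2 ▸ List.getElem_mem hq1
  set rv := w.reverse with hrv
  have hmemrv : (2 * i) ∈ rv := by rw [hrv]; simpa using hmem2i
  set t := rv.idxOf (2 * i) with ht
  have htlen : t < rv.length := List.idxOf_lt_length_iff.mpr hmemrv
  have hlen : rv.length = w.length := by simp [hrv]
  -- the part of w after its last unmarked i contains no i′ (condition (6)) and no i
  have hno_i : (rv.take t).count (2 * i - 1) = 0 := by
    rw [List.count_eq_zero]
    intro hmem
    obtain ⟨s, hs, hse⟩ := List.mem_take_iff_getElem.mp hmem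
    have hs1 : s < t := lt_of_lt_of_le hs (min_le_left _ _)
    have hs2 : s < rv.length := lt_of_lt_of_le hs (min_le_right _ _)
    have hwse : w[w.length - 1 - s]? = some (2 * i - 1) := by
      rw [← List.getElem?_reverse (by omega), ← hrv, List.getElem?_eq_getElem hs2, hse]
    obtain ⟨q, hq1, hq2⟩ := h8 i hi (w.length - 1 - s) hwse
    obtain ⟨hq3, hq4⟩ := List.getElem?_eq_some_iff.mp hq2
    have hrvq : rv[w.length - 1 - q]? = some (2 * i) := by
      rw [hrv, List.getElem?_reverse (by omega)]
      rw [(by omega : w.length - 1 - (w.length - 1 - q) = q)]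
      rw [List.getElem?_eq_getElem hq3, hq4]
    obtain ⟨hq5, hq6⟩ := List.getElem?_eq_some_iff.mp hrvq
    exact aux_not_getElem_lt_indexOf (by omega : w.length - 1 - q < t) hq5 hq6
  -- decompose rv around its first 2i (= last 2i of w)
  have hrveq : rv = rv.take t ++ 2 * i :: rv.drop (t + 1) := by
    conv_lhs => rw [← List.take_append_drop t rv, List.drop_eq_getElem_cons htlen,
      List.getElem_idxOf htlen]
  -- the combined word and the crucial prefix
  set A := (rv.take t).map (· + 1) with hA
  set P := w ++ A with hP
  have hWeq : w ++ augWord μ.length (fun _ => 0) (fun r => μ.getD r 0) T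
      = P ++ (2 * i + 1) :: (rv.drop (t + 1)).map (· + 1) := by
    rw [augWord, ← hw, ← hrv]
    conv_lhs => rw [hrveq]
    simp [hP, hA]
  have hpre : P ++ [2 * i + 1] <+: w ++ augWord μ.length (fun _ => 0) (fun r => μ.getD r 0) T := by
    rw [hWeq]
    exact ⟨(rv.drop (t + 1)).map (· + 1), by simp⟩
  have hpreP : P <+: w ++ augWord μ.length (fun _ => 0) (fun r => μ.getD r 0) T :=
    (List.prefix_append P [2 * i + 1]).trans hpre
  -- counts in P
  have hinj : Function.Injective (· + 1 : ℕ → ℕ) := fun a b h => by simpa using h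
  have hPi : P.count (2 * i) = w.count (2 * i) := by
    rw [hP, List.count_append, hA]
    have : List.count (2 * i) ((rv.take t).map (· + 1)) = (rv.take t).count (2 * i - 1) := by
      rw [(by omega : 2 * i = (2 * i - 1) + 1)]
      exact List.count_map_of_injective _ _ hinj _
    omega
  have hPi1 : P.count (2 * (i + 1)) = w.count (2 * (i + 1)) + (rv.take t).count (2 * i + 1) := by
    rw [hP, List.count_append, hA]
    have : List.count (2 * (i + 1)) ((rv.take t).map (· + 1)) = (rv.take t).count (2 * i + 1) := by
      rw [(by omega : 2 * (i + 1) = (2 * i + 1) + 1)]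
      exact List.count_map_of_injective _ _ hinj _
    omega
  -- lattice: counts at P are not equal (else next letter (i+1)′ forbidden)
  have hne : P.count (2 * i) ≠ P.count (2 * (i + 1)) := by
    intro heq
    exact (hL P (2 * i + 1) hpre i hi heq).2 rfl
  -- prefix monotonicity at P
  have hmono : P.count (2 * (i + 1)) ≤ P.count (2 * i) := by
    have hPeq := List.prefix_iff_eq_take.mp hpreP
    have := aux_lattice_count_le hL hi P.length
    rwa [← hPeq] at this
  have hfin : 2 * (i + 1) - 1 = 2 * i + 1 := by omega
  rw [hfin] at hci1 ⊢
  omega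
end

section
/- Let λ be a strict partition of n and μ a partition of n. For every integer s with s ≥ λ_1 + 1, g_{λμ} ≤ g_{(λ∪s)(μ∪s)}. -/
section Aux

open List

lemma aux_prefix_append_cases {α} {l xs ys : List α} (h : l <+: xs ++ ys) :
    l <+: xs ∨ ∃ t, t <+: ys ∧ l = xs ++ t := by
  rcases le_or_gt l.length xs.length with hle | hlt
  · exact Or.inl (List.prefix_of_prefix_length_le h (List.prefix_append xs ys) hle)
  · have hxl : xs <+: l :=
      List.prefix_of_prefix_length_le (List.prefix_append xs ys) h hlt.le
    obtain ⟨t, rfl⟩ := hxl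
    refine Or.inr ⟨t, ?_, rfl⟩
    obtain ⟨r, hr⟩ := h
    rw [List.append_assoc] at hr
    exact ⟨r, (List.append_cancel_left hr)⟩

lemma readingWord_succ (L : ℕ) (lo hi : ℕ → ℕ) (T : ℕ × ℕ → ℕ) :
    readingWord (L + 1) lo hi T =
      (((List.range' (lo 0) (hi 0 - lo 0)).reverse).map fun c => T (0, c)) ++
        readingWord L (fun r => lo (r + 1)) (fun r => hi (r + 1))
          (fun p => T (p.1 + 1, p.2)) := by
  unfold readingWord
  rw [List.range_succ_eq_map, List.flatMap_cons, List.flatMap_map]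

lemma readingWord_congr (L : ℕ) (lo hi : ℕ → ℕ) (T T' : ℕ × ℕ → ℕ)
    (h : ∀ r c, r < L → lo r ≤ c → c < hi r → T' (r, c) = T (r, c)) :
    readingWord L lo hi T' = readingWord L lo hi T := by
  unfold readingWord
  refine List.flatMap_congr fun r hr => ?_
  refine List.map_congr_left fun c hc => ?_
  rw [List.mem_reverse, List.mem_range'] at hc
  obtain ⟨i, hi1, rfl⟩ := hc
  exact h _ _ (List.mem_range.mp hr) (Nat.le_add_right _ _) (by omega)

lemma readingWord_map (L : ℕ) (lo hi : ℕ → ℕ) (T : ℕ × ℕ → ℕ) (f : ℕ → ℕ) :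
    readingWord L lo hi (fun p => f (T p)) = (readingWord L lo hi T).map f := by
  unfold readingWord
  rw [List.map_flatMap]
  exact List.flatMap_congr fun r _ => by rw [List.map_map]; rfl

lemma mem_readingWord (L : ℕ) (lo hi : ℕ → ℕ) (T : ℕ × ℕ → ℕ) {r c : ℕ}
    (h : InDiagram L lo hi (r, c)) : T (r, c) ∈ readingWord L lo hi T := by
  have h1 : r < L := h.1
  have h2 : lo r ≤ c := h.2.1
  have h3 : c < hi r := h.2.2
  unfold readingWord
  rw [List.mem_flatMap]
  refine ⟨r, List.mem_range.mpr h1, ?_⟩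
  rw [List.mem_map]
  refine ⟨c, ?_, rfl⟩
  rw [List.mem_reverse, List.mem_range']
  exact ⟨c - lo r, by omega, by omega⟩

end Aux
section Aux2

lemma aux_count_map_add_two (l : List ℕ) (a : ℕ) :
    (l.map (· + 2)).count (a + 2) = l.count a :=
  List.count_map_of_injective l (· + 2) (add_left_injective 2) a

lemma aux_count_map_zero {l : List ℕ} (h0 : ∀ y ∈ l, y ≠ 0) :
    (l.map (· + 2)).count 2 = 0 := by
  rw [List.count_eq_zero]
  intro hmem
  obtain ⟨y, hy, hy2⟩ := List.mem_map.mp hmem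
  have hy2' : y + 2 = 2 := hy2
  exact h0 y hy (by omega)

lemma aux_prefix_map {f : ℕ → ℕ} {t : List ℕ} {x : ℕ} {W : List ℕ}
    (h : t ++ [x] <+: W.map f) :
    ∃ t₀ x₀, t₀ ++ [x₀] <+: W ∧ t = t₀.map f ∧ x = f x₀ := by
  obtain ⟨r, hr⟩ := h
  rw [List.append_assoc] at hr
  obtain ⟨u, v, rfl, hu, hv⟩ := List.map_eq_append_iff.mp hr.symm
  obtain ⟨v₁, v₂, rfl, hv₁, hv₂⟩ := List.map_eq_append_iff.mp hv
  obtain ⟨x₀, rfl⟩ : ∃ x₀, v₁ = [x₀] := by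
    cases v₁ with
    | nil => simp at hv₁
    | cons a l =>
      cases l with
      | nil => exact ⟨a, rfl⟩
      | cons b m => simp at hv₁
  refine ⟨u, x₀, ⟨v₂, by simp⟩, hu.symm, ?_⟩
  simp only [List.map_cons, List.map_nil] at hv₁
  simpa using hv₁.symm

lemma aux_lattice (s : ℕ) (W : List ℕ) (hW : IsLatticeWord W)
    (h0 : ∀ y ∈ W, y ≠ 0) (h2 : W.count 2 < s) :
    IsLatticeWord (List.replicate s 2 ++ W.map (· + 2) ++ List.replicate s 3) := by
  have hmap2 : (W.map (· + 2)).count 2 = 0 := aux_count_map_zero h0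
  have hmap4 : (W.map (· + 2)).count 4 = W.count 2 := aux_count_map_add_two W 2
  have key : ∀ (t : List ℕ) (x : ℕ), t ++ [x] <+: W.map (· + 2) →
      ∀ i : ℕ, 1 ≤ i →
      (List.replicate s 2 ++ t).count (2 * i) =
        (List.replicate s 2 ++ t).count (2 * (i + 1)) →
      x ≠ 2 * (i + 1) ∧ x ≠ 2 * i + 1 := by
    intro t x ht i hi hcount
    obtain ⟨t₀, x₀, ht₀, rfl, rfl⟩ := aux_prefix_map ht
    have hsub : t₀.Sublist W := (List.sublist_append_left t₀ [x₀]).trans ht₀.sublist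
    rcases Nat.lt_or_ge i 2 with h1 | h1
    · exfalso
      interval_cases i
      have ht2 : (t₀.map (· + 2)).count 2 = 0 :=
        aux_count_map_zero (fun y hy => h0 y (hsub.subset hy))
      have h4 : (t₀.map (· + 2)).count 4 = t₀.count 2 := aux_count_map_add_two t₀ 2
      have hle : t₀.count 2 ≤ W.count 2 := hsub.count_le 2
      simp only [List.count_append, List.count_replicate] at hcount
      norm_num at hcount
      omega
    · obtain ⟨j, rfl⟩ : ∃ j, i = j + 2 := ⟨i - 2, by omega⟩
      have e1 : (List.replicate s 2 ++ t₀.map (· + 2)).count (2 * (j + 2)) =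
          t₀.count (2 * (j + 1)) := by
        rw [List.count_append, List.count_replicate]
        have h2j : 2 * (j + 2) = 2 * (j + 1) + 2 := by ring
        rw [if_neg (by simp), h2j, aux_count_map_add_two]
        omega
      have e2 : (List.replicate s 2 ++ t₀.map (· + 2)).count (2 * (j + 2 + 1)) =
          t₀.count (2 * (j + 1 + 1)) := by
        rw [List.count_append, List.count_replicate]
        have h2j : 2 * (j + 2 + 1) = 2 * (j + 1 + 1) + 2 := by ring
        rw [if_neg (by simp), h2j, aux_count_map_add_two]
        omega
      rw [e1, e2] at hcount
      have := hW t₀ x₀ ht₀ (j + 1) (by omega) hcount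
      omega
  intro p x hpx i hi hcount
  rw [List.append_assoc] at hpx
  rcases aux_prefix_append_cases hpx with h | ⟨t, ht, heq⟩
  · have hx : x = 2 := List.eq_of_mem_replicate (h.subset (by simp))
    omega
  · rcases List.eq_nil_or_concat t with rfl | ⟨t₀, y, rfl⟩
    · rw [List.append_nil] at heq
      have hx : x = 2 := List.eq_of_mem_replicate (heq ▸ (by simp : x ∈ p ++ [x]))
      omega
    · rw [List.concat_eq_append] at ht heq
      rw [← List.append_assoc] at heq
      have hlen : p.length = (List.replicate s 2 ++ t₀).length := by
        have hl := congrArg List.length heq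
        simp at hl ⊢
        omega
      obtain ⟨rfl, hxy⟩ := List.append_inj heq hlen
      obtain rfl : x = y := by simpa using hxy
      rcases aux_prefix_append_cases ht with h | ⟨u, hu, huv⟩
      · exact key t₀ x h i hi hcount
      · rcases List.eq_nil_or_concat u with rfl | ⟨u₀, y', rfl⟩
        · rw [List.append_nil] at huv
          exact key t₀ x (by rw [huv]) i hi hcount
        · rw [List.concat_eq_append] at hu huv
          have hy3 : y' = 3 := List.eq_of_mem_replicate (hu.subset (by simp))
          rw [← List.append_assoc] at huv
          have hlen2 : t₀.length = (W.map (· + 2) ++ u₀).length := by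
            have hl := congrArg List.length huv
            simp at hl ⊢
            omega
          obtain ⟨rfl, hx2⟩ := List.append_inj huv hlen2
          obtain rfl : x = y' := by simpa using hx2
          subst hy3
          refine ⟨by omega, ?_⟩
          intro hcontra
          have hi1 : i = 1 := by omega
          subst hi1
          have hu₀2 : u₀.count 2 = 0 := by
            rw [List.count_eq_zero]
            intro hmem
            have := List.eq_of_mem_replicate (hu.subset (List.mem_append_left _ hmem))
            omega
          have hu₀4 : u₀.count 4 = 0 := by
            rw [List.count_eq_zero]
            intro hmem
            have := List.eq_of_mem_replicate (hu.subset (List.mem_append_left _ hmem))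
            omega
          simp only [List.count_append, List.count_replicate] at hcount
          norm_num at hcount
          omega

end Aux2

section Aux3

lemma readingWord_ext (L : ℕ) (lo lo₂ hi hi₂ : ℕ → ℕ) (T : ℕ × ℕ → ℕ)
    (h : ∀ r, r < L → lo r = lo₂ r ∧ hi r = hi₂ r) :
    readingWord L lo hi T = readingWord L lo₂ hi₂ T := by
  unfold readingWord
  refine List.flatMap_congr fun r hr => ?_
  rw [(h r (List.mem_range.mp hr)).1, (h r (List.mem_range.mp hr)).2]

lemma readingWord_mem_ex (L : ℕ) (lo hi : ℕ → ℕ) (T : ℕ × ℕ → ℕ) {y : ℕ}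
    (hy : y ∈ readingWord L lo hi T) :
    ∃ r c, InDiagram L lo hi (r, c) ∧ y = T (r, c) := by
  unfold readingWord at hy
  rw [List.mem_flatMap] at hy
  obtain ⟨r, hr, hy⟩ := hy
  rw [List.mem_map] at hy
  obtain ⟨c, hc, rfl⟩ := hy
  rw [List.mem_reverse, List.mem_range'] at hc
  obtain ⟨j, hj, rfl⟩ := hc
  refine ⟨r, lo r + 1 * j, ?_, rfl⟩
  refine ⟨?_, ?_, ?_⟩ <;> dsimp only
  · exact List.mem_range.mp hr
  · omega
  · omega


lemma aux_count_one_map (l : List ℕ) : (l.map (· + 2)).count 1 = 0 := by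
  rw [List.count_eq_zero]
  intro hmem
  obtain ⟨y, hy, hy2⟩ := List.mem_map.mp hmem
  have : y + 2 = 1 := hy2
  omega

lemma aux_count_le_two (l : List ℕ) (h : ∀ x ∈ l, x = 1 ∨ x = 2) :
    l.count 1 + l.count 2 = l.length := by
  induction l with
  | nil => simp
  | cons a t ih =>
    have ha := h a (by simp)
    have ih' := ih fun x hx => h x (by simp [hx])
    rcases ha with rfl | rfl <;> simp [List.count_cons] <;> omega

end Aux3

section Aux4

/-- The map inserting a new top row of `s` unmarked 1's and shifting all letters. -/
def auxF (s : ℕ) (T : ℕ × ℕ → ℕ) : ℕ × ℕ → ℕ := fun p =>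
  if p.1 = 0 then (if p.2 < s then 2 else 0)
  else if T (p.1 - 1, p.2) = 0 then 0 else T (p.1 - 1, p.2) + 2

lemma aux_word (mu : List ℕ) (s : ℕ) (T : ℕ × ℕ → ℕ)
    (hpos : ∀ p, InDiagram mu.length (fun _ => 0) (fun r => mu.getD r 0) p → 1 ≤ T p) :
    readingWord (s :: mu).length (fun _ => 0) (fun r => (s :: mu).getD r 0) (auxF s T)
      = List.replicate s 2 ++
        (readingWord mu.length (fun _ => 0) (fun r => mu.getD r 0) T).map (· + 2) := by
  rw [show (s :: mu).length = mu.length + 1 from rfl, readingWord_succ]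
  congr 1
  · rw [List.eq_replicate_iff]
    constructor
    · simp
    · intro b hb
      obtain ⟨c, hc, rfl⟩ := List.mem_map.mp hb
      rw [List.mem_reverse, List.mem_range'] at hc
      obtain ⟨j, hj, rfl⟩ := hc
      have hcs : j < s := by simpa using hj
      simp [auxF, hcs]
  · rw [readingWord_ext (mu.length) _ (fun _ => 0) _ (fun r => mu.getD r 0) _
      (fun r hr => ⟨rfl, by simp⟩)]
    rw [readingWord_congr mu.length (fun _ => 0) (fun r => mu.getD r 0)
      (fun p => T p + 2) _ ?_]
    · exact readingWord_map mu.length _ _ T (· + 2)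
    · intro r c hr h0c hc
      have hd : InDiagram mu.length (fun _ => 0) (fun r => mu.getD r 0) (r, c) :=
        ⟨hr, h0c, hc⟩
      have hposT := hpos _ hd
      show auxF s T (r + 1, c) = T (r, c) + 2
      simp only [auxF, Nat.add_sub_cancel, if_neg (Nat.succ_ne_zero r)]
      rw [if_neg (by omega)]

end Aux4

section Aux5

lemma aux_count_map_add_one (l : List ℕ) (a : ℕ) :
    (l.map (· + 1)).count (a + 1) = l.count a :=
  List.count_map_of_injective l (· + 1) (add_left_injective 1) a

lemma aux_mem (lam mu : List ℕ) (s : ℕ) (hs1 : lam.getD 0 0 + 1 ≤ s)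
    (T : ℕ × ℕ → ℕ) (hT : T ∈ gSet lam mu) : auxF s T ∈ gSet (s :: lam) (s :: mu) := by
  obtain ⟨⟨h1, h2, h3, h4, h5, h6, h7, h8⟩, h9⟩ := hT
  set L := mu.length with hL
  set w : List ℕ := readingWord L (fun _ => 0) (fun r => mu.getD r 0) T with hwdef
  set aw : List ℕ := augWord L (fun _ => 0) (fun r => mu.getD r 0) T with hawdef
  have hwmem : ∀ y ∈ w, 1 ≤ y := by
    intro y hy
    obtain ⟨r, c, hd, rfl⟩ := readingWord_mem_ex _ _ _ _ hy
    exact h1 _ hd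
  have hword : readingWord (s :: mu).length (fun _ => 0) (fun r => (s :: mu).getD r 0)
      (auxF s T) = List.replicate s 2 ++ w.map (· + 2) := aux_word mu s T h1
  have haug : augWord (s :: mu).length (fun _ => 0) (fun r => (s :: mu).getD r 0)
      (auxF s T) = aw.map (· + 2) ++ List.replicate s 3 := by
    unfold augWord
    rw [hword]
    rw [List.reverse_append, List.reverse_replicate, List.map_append, List.map_replicate,
      ← List.map_reverse]
    congr 1
    rw [hawdef]
    unfold augWord
    rw [← hwdef, List.map_map, List.map_map]
    exact List.map_congr_left fun x _ => by simp
  have hND0 : ∀ c, InDiagram (s :: mu).length (fun _ => 0)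
      (fun r => (s :: mu).getD r 0) (0, c) ↔ c < s := by
    intro c
    constructor
    · intro h; exact h.2.2
    · intro h; exact ⟨Nat.succ_pos _, Nat.zero_le _, h⟩
  have hNDS : ∀ r c, InDiagram (s :: mu).length (fun _ => 0)
      (fun r => (s :: mu).getD r 0) (r + 1, c) ↔
      InDiagram L (fun _ => 0) (fun r => mu.getD r 0) (r, c) := by
    intro r c
    constructor
    · intro h; exact ⟨Nat.lt_of_succ_lt_succ h.1, h.2.1, h.2.2⟩
    · intro h; exact ⟨Nat.succ_lt_succ h.1, h.2.1, h.2.2⟩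
  have hF0 : ∀ c, c < s → auxF s T (0, c) = 2 := by
    intro c hc; simp [auxF, hc]
  have hFS : ∀ r c, InDiagram L (fun _ => 0) (fun r => mu.getD r 0) (r, c) →
      auxF s T (r + 1, c) = T (r, c) + 2 := by
    intro r c hd
    have := h1 _ hd
    simp only [auxF, Nat.add_sub_cancel, if_neg (Nat.succ_ne_zero r)]
    rw [if_neg (by omega)]
  refine ⟨⟨?_, ?_, ?_, ?_, ?_, ?_, ?_, ?_⟩, ?_⟩
  · -- positivity
    rintro ⟨r, c⟩ hp
    cases r with
    | zero => rw [hF0 c ((hND0 c).mp hp)]; omega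
    | succ r =>
      have hd := (hNDS r c).mp hp
      rw [hFS r c hd]
      omega
  · -- zero outside
    rintro ⟨r, c⟩ hp
    cases r with
    | zero =>
      have hcs : ¬ c < s := fun h => hp ((hND0 c).mpr h)
      simp [auxF, hcs]
    | succ r =>
      have hd : ¬ InDiagram L (fun _ => 0) (fun r => mu.getD r 0) (r, c) :=
        fun h => hp ((hNDS r c).mpr h)
      have := h2 _ hd
      simp [auxF, this]
  · -- rows weakly increase
    intro r c hd hd'
    cases r with
    | zero =>
      rw [hF0 c ((hND0 c).mp hd), hF0 (c+1) ((hND0 (c+1)).mp hd')]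
    | succ r =>
      rw [hFS r c ((hNDS r c).mp hd), hFS r (c+1) ((hNDS r (c+1)).mp hd')]
      have := h3 r c ((hNDS r c).mp hd) ((hNDS r (c+1)).mp hd')
      omega
  · -- columns weakly increase
    intro r c hd hd'
    cases r with
    | zero =>
      rw [hF0 c ((hND0 c).mp hd), hFS 0 c ((hNDS 0 c).mp hd')]
      omega
    | succ r =>
      rw [hFS r c ((hNDS r c).mp hd), hFS (r+1) c ((hNDS (r+1) c).mp hd')]
      have := h4 r c ((hNDS r c).mp hd) ((hNDS (r+1) c).mp hd')
      omega
  · -- at most one i' per row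
    rintro r c₁ c₂ i hi hne hd1 hd2 ⟨e1, e2⟩
    cases r with
    | zero =>
      rw [hF0 c₁ ((hND0 c₁).mp hd1)] at e1
      omega
    | succ r =>
      have hd1' := (hNDS r c₁).mp hd1
      have hd2' := (hNDS r c₂).mp hd2
      rw [hFS r c₁ hd1'] at e1
      rw [hFS r c₂ hd2'] at e2
      have hT1 := h1 _ hd1'
      exact h5 r c₁ c₂ (i - 1) (by omega) hne hd1' hd2' ⟨by omega, by omega⟩
  · -- at most one unmarked i per column
    rintro r₁ r₂ c i hi hne hd1 hd2 ⟨e1, e2⟩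
    cases r₁ with
    | zero =>
      cases r₂ with
      | zero => exact hne rfl
      | succ r₂ =>
        have hd2' := (hNDS r₂ c).mp hd2
        rw [hF0 c ((hND0 c).mp hd1)] at e1
        rw [hFS r₂ c hd2'] at e2
        have := h1 _ hd2'
        omega
    | succ r₁ =>
      cases r₂ with
      | zero =>
        have hd1' := (hNDS r₁ c).mp hd1
        rw [hFS r₁ c hd1'] at e1
        rw [hF0 c ((hND0 c).mp hd2)] at e2
        have := h1 _ hd1'
        omega
      | succ r₂ =>
        have hd1' := (hNDS r₁ c).mp hd1
        have hd2' := (hNDS r₂ c).mp hd2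
        rw [hFS r₁ c hd1'] at e1
        rw [hFS r₂ c hd2'] at e2
        have hT1 := h1 _ hd1'
        exact h6 r₁ r₂ c (i - 1) (by omega) (fun h => hne (by omega)) hd1' hd2'
          ⟨by omega, by omega⟩
  · -- lattice
    rw [hword, haug]
    have h0 : ∀ y ∈ w ++ aw, y ≠ 0 := by
      intro y hy
      rcases List.mem_append.mp hy with hy | hy
      · have := hwmem y hy; omega
      · rw [hawdef] at hy
        unfold augWord at hy
        obtain ⟨z, hz, rfl⟩ := List.mem_map.mp hy
        omega
    have hcnt : (w ++ aw).count 2 < s := by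
      rw [List.count_append]
      have hca : aw.count 2 = w.count 1 := by
        rw [hawdef]
        unfold augWord
        rw [← hwdef]
        have := aux_count_map_add_one w.reverse 1
        simpa [List.count_reverse] using this
      have hc9 := h9 1 le_rfl
      unfold contentAt at hc9
      rw [← hwdef] at hc9
      have e21 : (2 * 1 : ℕ) = 2 := rfl
      have e211 : (2 * 1 - 1 : ℕ) = 1 := rfl
      have e110 : (1 : ℕ) - 1 = 0 := rfl
      rw [e21, e211, e110] at hc9
      omega
    have hlat := aux_lattice s (w ++ aw) h7 h0 hcnt
    rw [List.map_append] at hlat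
    simpa [List.append_assoc] using hlat
  · -- marked letters have later unmarked partner
    intro i hi p hp
    rw [hword] at hp
    rcases Nat.lt_or_ge p s with hps | hps
    · rw [List.getElem?_append_left (by simpa using hps), List.getElem?_replicate,
        if_pos hps] at hp
      exfalso
      have := Option.some.inj hp
      omega
    · rw [List.getElem?_append_right (by simpa using hps), List.getElem?_map] at hp
      simp only [List.length_replicate] at hp
      cases hy : w[p - s]? with
      | none => rw [hy] at hp; simp at hp
      | some y =>
        rw [hy] at hp
        simp only [Option.map_some] at hp
        have hy2 : y + 2 = 2 * i - 1 := Option.some.inj hp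
        have hymem : y ∈ w := by
          rw [List.mem_iff_getElem?]; exact ⟨p - s, hy⟩
        have hy1 := hwmem y hymem
        have hi2 : 2 ≤ i := by omega
        have hy' : w[p - s]? = some (2 * (i - 1) - 1) := by
          rw [hy]; congr 1; omega
        obtain ⟨q, hq1, hq2⟩ := h8 (i - 1) (by omega) (p - s) hy'
        refine ⟨q + s, by omega, ?_⟩
        rw [hword, List.getElem?_append_right (by simp)]
        simp only [List.length_replicate, Nat.add_sub_cancel]
        rw [List.getElem?_map, hq2]
        simp only [Option.map_some]
        congr 1
        omega
  · -- content
    intro i hi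
    unfold contentAt
    rw [hword]
    rcases Nat.lt_or_ge i 2 with h1' | h1'
    · interval_cases i
      have hm2 : (w.map (· + 2)).count 2 = 0 :=
        aux_count_map_zero fun y hy => by have := hwmem y hy; omega
      have hm1 : (w.map (· + 2)).count 1 = 0 := aux_count_one_map w
      simp only [List.count_append, List.count_replicate]
      norm_num [hm2, hm1]
    · obtain ⟨j, rfl⟩ : ∃ j, i = j + 2 := ⟨i - 2, by omega⟩
      have e1 : (2 * (j + 2) : ℕ) = 2 * (j + 1) + 2 := by ring
      have e2 : (2 * (j + 2) - 1 : ℕ) = (2 * j + 1) + 2 := by omega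
      have c1 : (w.map (· + 2)).count (2 * (j + 2)) = w.count (2 * (j + 1)) := by
        rw [e1, aux_count_map_add_two]
      have c2 : (w.map (· + 2)).count (2 * (j + 2) - 1) = w.count (2 * j + 1) := by
        rw [e2, aux_count_map_add_two]
      have hc9 := h9 (j + 1) (by omega)
      unfold contentAt at hc9
      rw [← hwdef] at hc9
      have e3 : (2 * (j + 1) - 1 : ℕ) = 2 * j + 1 := by omega
      have e5 : j + 1 - 1 = j := rfl
      rw [e3, e5] at hc9
      simp only [List.count_append, List.count_replicate]
      rw [if_neg (by simp), if_neg (by simp; omega)]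
      have e4 : (s :: lam).getD (j + 2 - 1) 0 = lam.getD j 0 := by
        show (s :: lam).getD (j + 1) 0 = lam.getD j 0
        simp
      rw [e4, c1, c2]
      omega

end Aux5

section Aux6

lemma aux_getD_le_foldr (l : List ℕ) (r : ℕ) : l.getD r 0 ≤ l.foldr max 0 := by
  induction l generalizing r with
  | nil => simp
  | cons a t ih =>
    cases r with
    | zero => simp [List.foldr]
    | succ n =>
      simp only [List.getD_cons_succ, List.foldr]
      exact le_trans (ih n) (le_max_right _ _)

lemma gSet_finite (lam mu : List ℕ) : (gSet lam mu).Finite := by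
  classical
  set L := mu.length with hL
  set C := mu.foldr max 0 with hC
  set B := 2 * lam.length with hB
  set S : Set (ℕ × ℕ → ℕ) :=
    {T | ∀ p : ℕ × ℕ, T p ≤ B ∧ (¬(p.1 < L ∧ p.2 < C) → T p = 0)} with hS
  have hsub : gSet lam mu ⊆ S := by
    rintro T ⟨⟨h1, h2, _, _, _, _, _, _⟩, h9⟩
    intro p
    by_cases hd : InDiagram L (fun _ => 0) (fun r => mu.getD r 0) p
    · constructor
      · -- bound the entry
        have hmem : T p ∈ readingWord L (fun _ => 0) (fun r => mu.getD r 0) T := by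
          obtain ⟨r, c⟩ := p
          exact mem_readingWord L _ _ T hd
        set t := T p with ht
        have ht1 : 1 ≤ t := h1 p hd
        set i := (t + 1) / 2 with hi
        have hi1 : 1 ≤ i := by omega
        have hti : t = 2 * i ∨ t = 2 * i - 1 := by omega
        have hcnt : 1 ≤ contentAt (readingWord L (fun _ => 0) (fun r => mu.getD r 0) T) i := by
          unfold contentAt
          have hpos : 0 < (readingWord L (fun _ => 0) (fun r => mu.getD r 0) T).count t :=
            List.count_pos_iff.mpr hmem
          rcases hti with h | h <;> rw [h] at hpos <;> omega
        rw [h9 i hi1] at hcnt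
        have hlen : i - 1 < lam.length := by
          by_contra hcon
          rw [List.getD_eq_default _ _ (by omega)] at hcnt
          omega
        omega
      · intro hbox
        exfalso
        apply hbox
        obtain ⟨r, c⟩ := p
        have h1' : r < L := hd.1
        have h2' : c < mu.getD r 0 := hd.2.2
        exact ⟨h1', lt_of_lt_of_le h2' (aux_getD_le_foldr mu r)⟩
    · have := h2 p hd
      constructor
      · omega
      · intro _; exact this
  have hSfin : S.Finite := by
    rw [← Set.finite_coe_iff]
    let f : S → (Fin L × Fin C → Fin (B + 1)) := fun T q =>
      ⟨T.1 (q.1.1, q.2.1), by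
        have := (T.2 (q.1.1, q.2.1)).1
        omega⟩
    have hfinj : Function.Injective f := by
      intro T₁ T₂ h
      apply Subtype.ext
      funext p
      by_cases hbox : p.1 < L ∧ p.2 < C
      · have := congrFun h (⟨p.1, hbox.1⟩, ⟨p.2, hbox.2⟩)
        have h2 := congrArg Fin.val this
        simpa using h2
      · rw [(T₁.2 p).2 hbox, (T₂.2 p).2 hbox]
    exact Finite.of_injective f hfinj
  exact hSfin.subset hsub

end Aux6

section Aux7

lemma insertPart_eq (l : List ℕ) (s : ℕ) (h : l.getD 0 0 < s) :
    insertPart l s = s :: l := by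
  cases l with
  | nil => simp [insertPart]
  | cons a t =>
    have ha : ¬ s ≤ a := by
      have : (a :: t).getD 0 0 = a := rfl
      omega
    simp [insertPart, ha]

lemma aux_inj (lam mu : List ℕ) (s : ℕ) : Set.InjOn (auxF s) (gSet lam mu) := by
  intro T₁ _ T₂ _ h
  funext p
  obtain ⟨r, c⟩ := p
  have hc := congrFun h (r + 1, c)
  simp only [auxF, Nat.succ_ne_zero, if_false, Nat.add_sub_cancel] at hc
  by_cases e1 : T₁ (r, c) = 0 <;> by_cases e2 : T₂ (r, c) = 0
  · rw [e1, e2]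
  · rw [if_pos e1, if_neg e2] at hc; omega
  · rw [if_neg e1, if_pos e2] at hc; omega
  · rw [if_neg e1, if_neg e2] at hc; omega

lemma aux_empty (lam mu : List ℕ) (s : ℕ) (hs : lam.getD 0 0 + 1 ≤ s)
    (hbig : s ≤ mu.getD 0 0) : gSet lam mu = ∅ := by
  ext T
  simp only [Set.mem_empty_iff_false, iff_false]
  rintro ⟨⟨h1, h2, h3, h4, h5, h6, h7, h8⟩, h9⟩
  cases mu with
  | nil => simp [List.getD] at hbig; omega
  | cons m mu' =>
    have hm : s ≤ m := by simpa using hbig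
    have hs1 : 1 ≤ s := by omega
    obtain ⟨k, rfl⟩ : ∃ k, m = k + 1 := ⟨m - 1, by omega⟩
    set L := ((k + 1) :: mu').length with hL
    set w : List ℕ := readingWord L (fun _ => 0) (fun r => ((k + 1) :: mu').getD r 0) T
      with hwdef
    set aw : List ℕ := augWord L (fun _ => 0) (fun r => ((k + 1) :: mu').getD r 0) T
      with hawdef
    -- decompose the reading word
    have hb0 : w = (((List.range' 0 (k + 1)).reverse).map fun c => T (0, c)) ++
        readingWord mu'.length (fun r => 0) (fun r => mu'.getD r 0)
          (fun p => T (p.1 + 1, p.2)) := by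
      rw [hwdef, hL, show ((k + 1) :: mu').length = mu'.length + 1 from rfl, readingWord_succ]
      congr 1
    have hrow0 : ∀ c, c < k + 1 →
        InDiagram L (fun _ => 0) (fun r => ((k + 1) :: mu').getD r 0) (0, c) :=
      fun c hc => ⟨Nat.succ_pos _, Nat.zero_le _, hc⟩
    -- head of the word
    have hw1 : w = T (0, k) :: ((((List.range' 0 k).reverse).map fun c => T (0, c)) ++
        readingWord mu'.length (fun r => 0) (fun r => mu'.getD r 0)
          (fun p => T (p.1 + 1, p.2))) := by
      rw [hb0, List.range'_concat, List.reverse_append]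
      simp
    have hxpre : [T (0, k)] <+: w ++ aw := by
      rw [hw1]
      exact ⟨_, rfl⟩
    have hxlat := fun i hi => h7 [] (T (0, k)) hxpre i hi (by simp)
    have hxle : T (0, k) ≤ 2 := by
      by_contra hcon
      push_neg at hcon
      rcases Nat.even_or_odd (T (0, k)) with ⟨t, ht⟩ | ⟨t, ht⟩
      · exact (hxlat (t - 1) (by omega)).1 (by omega)
      · exact (hxlat t (by omega)).2 (by omega)
    -- row 0 is weakly increasing
    have hchain : ∀ c₂, c₂ < k + 1 → ∀ c₁, c₁ ≤ c₂ → T (0, c₁) ≤ T (0, c₂) := by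
      intro c₂
      induction c₂ with
      | zero =>
        intro _ c₁ hc₁
        have : c₁ = 0 := by omega
        rw [this]
      | succ n ih =>
        intro hn c₁ hc₁
        rcases Nat.lt_or_ge c₁ (n + 1) with h' | h'
        · refine le_trans (ih (by omega) c₁ (by omega)) ?_
          exact h3 0 n (hrow0 n (by omega)) (hrow0 (n + 1) (by omega))
        · have : c₁ = n + 1 := by omega
          rw [this]
    -- entries of row 0 are 1 or 2
    set b0 : List ℕ := ((List.range' 0 (k + 1)).reverse).map fun c => T (0, c) with hb0def
    have hmem12 : ∀ x ∈ b0, x = 1 ∨ x = 2 := by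
      intro x hx
      rw [hb0def] at hx
      obtain ⟨c, hc, rfl⟩ := List.mem_map.mp hx
      rw [List.mem_reverse, List.mem_range'] at hc
      obtain ⟨j, hj, rfl⟩ := hc
      have h1c := h1 _ (hrow0 (0 + 1 * j) (by omega))
      have h2c : T (0, 0 + 1 * j) ≤ T (0, k) := hchain k (by omega) _ (by omega)
      omega
    have hcnt12 : b0.count 1 + b0.count 2 = k + 1 := by
      rw [aux_count_le_two b0 hmem12, hb0def]
      simp
    have hc9 := h9 1 le_rfl
    unfold contentAt at hc9
    rw [← hwdef] at hc9
    have e21 : (2 * 1 : ℕ) = 2 := rfl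
    have e211 : (2 * 1 - 1 : ℕ) = 1 := rfl
    have e110 : (1 : ℕ) - 1 = 0 := rfl
    rw [e21, e211, e110] at hc9
    have hwc : b0.count 1 ≤ w.count 1 ∧ b0.count 2 ≤ w.count 2 := by
      constructor <;> (rw [hb0, List.count_append]; omega)
    omega

end Aux7


/-- Lemma 2.3, second inequality: for a strict partition `λ` of `n`, a partition
`μ` of `n` and `s ≥ λ_1 + 1`, we have `g_{λμ} ≤ g_{(λ∪s)(μ∪s)}`. -/
theorem gCoeff_le_insertPart (n : ℕ) (lam mu : List ℕ) (s : ℕ)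
    (hlam : IsStrictPartitionList lam) (hlamn : lam.sum = n)
    (hmu : IsPartitionList mu) (hmun : mu.sum = n)
    (hs : lam.getD 0 0 + 1 ≤ s) :
    gCoeff lam mu ≤ gCoeff (insertPart lam s) (insertPart mu s) := by
  by_cases hcase : mu.getD 0 0 < s
  · rw [insertPart_eq lam s (by omega), insertPart_eq mu s hcase]
    unfold gCoeff
    exact Set.ncard_le_ncard_of_injOn (auxF s)
      (fun T hT => aux_mem lam mu s hs T hT) (aux_inj lam mu s) (gSet_finite _ _)
  · have hempty : gSet lam mu = ∅ := aux_empty lam mu s hs (by omega)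
    unfold gCoeff
    rw [hempty]
    simp
end

section
/- For every n ≥ 1 and every partition μ of n: g_{(n)μ} = 1 if μ is a hook (k, 1^{n−k}) for some 1 ≤ k ≤ n, and g_{(n)μ} = 0 otherwise. -/
open List in
lemma mem_readingWord_of_inDiagram (nrows : ℕ) (lo hi : ℕ → ℕ) (T : ℕ × ℕ → ℕ)
    {p : ℕ × ℕ} (hp : InDiagram nrows lo hi p) :
    T p ∈ readingWord nrows lo hi T := by
  obtain ⟨r, c⟩ := p
  obtain ⟨h1, h2, h3⟩ := hp
  dsimp only at h1 h2 h3
  simp only [readingWord, List.mem_flatMap, List.mem_map, List.mem_reverse, List.mem_range,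
    List.mem_range'_1]
  exact ⟨r, h1, c, ⟨h2, by omega⟩, rfl⟩

lemma exists_of_mem_readingWord {nrows : ℕ} {lo hi : ℕ → ℕ} {T : ℕ × ℕ → ℕ} {x : ℕ}
    (hx : x ∈ readingWord nrows lo hi T) :
    ∃ p, InDiagram nrows lo hi p ∧ T p = x := by
  simp only [readingWord, List.mem_flatMap, List.mem_map, List.mem_reverse, List.mem_range,
    List.mem_range'_1] at hx
  obtain ⟨r, hr, c, ⟨hc1, hc2⟩, hTx⟩ := hx
  refine ⟨(r, c), ⟨hr, hc1, ?_⟩, hTx⟩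
  show c < hi r
  omega
lemma count_length_binary (w : List ℕ) (hw : ∀ x ∈ w, x = 1 ∨ x = 2) :
    w.count 1 + w.count 2 = w.length := by
  induction w with
  | nil => simp
  | cons a t ih =>
    have ha := hw a (List.mem_cons_self)
    have ih' := ih (fun x hx => hw x (List.mem_cons_of_mem a hx))
    rcases ha with h | h <;> subst h <;>
      simp [List.count_cons] <;> omega

lemma lattice_binary (w : List ℕ) (hw : ∀ x ∈ w, x = 1 ∨ x = 2) :
    IsLatticeWord (w ++ w.reverse.map (· + 1)) := by
  intro p x hpx i hi hcount
  set a := w.reverse.map (· + 1) with ha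
  have hmemL : ∀ y ∈ w ++ a, y = 1 ∨ y = 2 ∨ y = 3 := by
    intro y hy
    rcases List.mem_append.1 hy with h | h
    · rcases hw y h with h' | h' <;> omega
    · rw [ha] at h
      obtain ⟨z, hz, rfl⟩ := List.mem_map.1 h
      rcases hw z (List.mem_reverse.1 hz) with h' | h' <;> omega
  have hxmem : x ∈ w ++ a := by
    have := hpx.sublist
    exact this.mem (by simp)
  have hx3 := hmemL x hxmem
  constructor
  · intro h; omega
  · intro h
    -- then i = 1 and x = 3
    have hi1 : i = 1 := by omega
    have hx : x = 3 := by omega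
    subst hi1; subst hx
    -- show |p| ≥ |w|
    have hplen : w.length ≤ p.length := by
      by_contra hlt
      push_neg at hlt
      have hpre : p ++ [3] <+: w := by
        have h1 : p ++ [3] = (w ++ a).take (p.length + 1) := by
          rw [List.prefix_iff_eq_take.1 hpx]; simp
        have h2 : (w ++ a).take (p.length + 1) = w.take (p.length + 1) := by
          apply List.take_append_of_le_length; omega
        rw [h1, h2]
        exact List.take_prefix _ _
      have : (3 : ℕ) ∈ w := hpre.sublist.mem (by simp)
      rcases hw 3 this with h' | h' <;> omega
    have hwp : w <+: p :=
      List.prefix_of_prefix_length_le (List.prefix_append w a)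
        ((List.prefix_append p [3]).trans hpx) hplen
    have hp4 : p.count 4 = 0 := by
      rw [List.count_eq_zero]
      intro h4
      have h4' : (4:ℕ) ∈ w ++ a := ((List.prefix_append p [3]).trans hpx).sublist.mem h4
      have := hmemL 4 h4'
      omega
    have hcount' : p.count 2 = 0 := by
      have h21 : 2 * 1 = 2 := rfl
      have h22 : 2 * (1 + 1) = 4 := rfl
      rw [h21, h22] at hcount
      omega
    have hw2 : (2:ℕ) ∉ w := by
      intro h2
      have := hwp.sublist.count_le 2
      have := List.count_pos_iff.2 h2
      omega
    rcases List.mem_append.1 hxmem with h | h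
    · rcases hw 3 h with h' | h' <;> omega
    · rw [ha] at h
      obtain ⟨z, hz, hz3⟩ := List.mem_map.1 h
      have : z = 2 := by omega
      exact hw2 (this ▸ List.mem_reverse.1 hz)
lemma flatMap_range_succ' (f : ℕ → List ℕ) (t : ℕ) :
    (List.range (t+1)).flatMap f = f 0 ++ (List.range t).flatMap (fun r => f (r+1)) := by
  rw [List.range_succ_eq_map, List.flatMap_cons, List.flatMap_map]

lemma flatMap_singleton_map (l : List ℕ) (f : ℕ → List ℕ) (g : ℕ → ℕ)
    (h : ∀ x ∈ l, f x = [g x]) : l.flatMap f = l.map g := by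
  induction l with
  | nil => simp
  | cons a t ih =>
    rw [List.flatMap_cons, h a (List.mem_cons_self),
      ih (fun x hx => h x (List.mem_cons_of_mem a hx))]
    rfl

lemma hook_readingWord (k t : ℕ) (T : ℕ × ℕ → ℕ) :
    readingWord (t+1) (fun _ => 0) (fun r => (k :: List.replicate t 1).getD r 0) T =
      ((List.range k).reverse.map fun c => T (0, c)) ++
        (List.range t).map fun r => T (r+1, 0) := by
  unfold readingWord
  rw [flatMap_range_succ']
  congr 1
  · simp [List.range_eq_range']
  · apply flatMap_singleton_map
    intro r hr
    have hrt : r < t := List.mem_range.1 hr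
    have hgd : (k :: List.replicate t (1:ℕ)).getD (r+1) 0 = 1 := by
      simp [List.getD, List.getElem?_replicate, hrt]
    show (List.map (fun c => T (r + 1, c))
        (List.range' 0 ((k :: List.replicate t 1).getD (r+1) 0 - 0)).reverse) = [T (r + 1, 0)]
    rw [hgd]
    rfl
lemma hook_w_get0 (k t j : ℕ) (hj : j < k) (T : ℕ × ℕ → ℕ) :
    ((((List.range k).reverse.map fun c => T (0, c)) ++
        (List.range t).map fun r => T (r+1, 0)))[j]? = some (T (0, k-1-j)) := by
  rw [List.getElem?_append_left (by simpa using hj)]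
  rw [List.getElem?_map]
  rw [List.getElem?_reverse (by simpa using hj)]
  simp only [List.length_range]
  rw [List.getElem?_range (by omega)]
  rfl

lemma hook_w_last (k t : ℕ) (hk : 1 ≤ k) (T : ℕ × ℕ → ℕ) :
    ((((List.range k).reverse.map fun c => T (0, c)) ++
        (List.range t).map fun r => T (r+1, 0)))[k+t-1]? = some (T (t, 0)) := by
  cases t with
  | zero =>
    have := hook_w_get0 k 0 (k-1) (by omega) T
    simpa [Nat.sub_sub_self hk] using this
  | succ t =>
    rw [show k + (t+1) - 1 = k + t by omega]
    rw [List.getElem?_append_right (by simp)]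
    simp only [List.length_map, List.length_reverse, List.length_range, Nat.add_sub_cancel_left,
      List.getElem?_map]
    rw [List.getElem?_range (by omega)]
    rfl

lemma hook_w_length (k t : ℕ) (T : ℕ × ℕ → ℕ) :
    ((((List.range k).reverse.map fun c => T (0, c)) ++
        (List.range t).map fun r => T (r+1, 0))).length = k + t := by
  simp
lemma entries_le_two (nrows : ℕ) (hi : ℕ → ℕ) (T : ℕ × ℕ → ℕ) (n : ℕ)
    (hc : HasContent nrows (fun _ => 0) hi T [n]) (x : ℕ)
    (hx : x ∈ readingWord nrows (fun _ => 0) hi T) (hx1 : 1 ≤ x) : x = 1 ∨ x = 2 := by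
  by_contra hcon
  push_neg at hcon
  have hx3 : 3 ≤ x := by omega
  have hii : 2 ≤ (x+1)/2 ∧ (x = 2*((x+1)/2) ∨ x = 2*((x+1)/2) - 1) := by omega
  have hcc := hc ((x+1)/2) (by omega)
  simp only [contentAt] at hcc
  have hg : ([n].getD ((x+1)/2 - 1) 0) = 0 := by
    obtain ⟨j, hj⟩ : ∃ j, (x+1)/2 - 1 = j + 1 := ⟨(x+1)/2 - 2, by omega⟩
    rw [hj]
    rfl
  rw [hg] at hcc
  have h1 : (readingWord nrows (fun _ => 0) hi T).count (2*((x+1)/2)) = 0 := by omega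
  have h2 : (readingWord nrows (fun _ => 0) hi T).count (2*((x+1)/2) - 1) = 0 := by omega
  rcases hii.2 with h' | h'
  · rw [h'] at hx; exact absurd hx (List.count_eq_zero.1 h1)
  · rw [h'] at hx; exact absurd hx (List.count_eq_zero.1 h2)

lemma content_binary (w : List ℕ) (n : ℕ) (hw : ∀ x ∈ w, x = 1 ∨ x = 2)
    (hlen : w.length = n) : ∀ i, 1 ≤ i → contentAt w i = [n].getD (i-1) 0 := by
  intro i hi
  rcases Nat.lt_or_ge i 2 with h | h
  · have : i = 1 := by omega
    subst this
    have := count_length_binary w hw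
    show w.count 2 + w.count (2*1-1) = [n].getD 0 0
    have h21 : 2*1-1 = 1 := rfl
    rw [h21]
    simp [List.getD]
    omega
  · have hm1 : (2*i : ℕ) ∉ w := fun hm => by rcases hw _ hm with h' | h' <;> omega
    have hm2 : (2*i - 1 : ℕ) ∉ w := fun hm => by rcases hw _ hm with h' | h' <;> omega
    have hg : ([n].getD (i-1) 0) = 0 := by
      obtain ⟨j, hj⟩ : ∃ j, i - 1 = j + 1 := ⟨i - 2, by omega⟩
      rw [hj]
      rfl
    rw [contentAt, hg, List.count_eq_zero.2 hm1, List.count_eq_zero.2 hm2]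

lemma rowMono (nrows : ℕ) (hi : ℕ → ℕ) (T : ℕ × ℕ → ℕ)
    (h3 : ∀ r c, InDiagram nrows (fun _ => 0) hi (r, c) →
      InDiagram nrows (fun _ => 0) hi (r, c+1) → T (r, c) ≤ T (r, c+1)) :
    ∀ r c d, InDiagram nrows (fun _ => 0) hi (r, c+d) → T (r, c) ≤ T (r, c+d) := by
  intro r c d
  induction d with
  | zero => intro _; exact le_refl _
  | succ d ih =>
    intro h
    obtain ⟨hh1, _, hh2⟩ := h
    have hh1' : r < nrows := hh1
    have hh2' : c + (d+1) < hi r := hh2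
    have hd : InDiagram nrows (fun _ => 0) hi (r, c+d) :=
      ⟨hh1', Nat.zero_le _, show c + d < hi r by omega⟩
    have hstep := h3 r (c+d) hd ⟨hh1', Nat.zero_le _, show c + d + 1 < hi r by omega⟩
    exact le_trans (ih hd) hstep
def hookT (n k : ℕ) : ℕ × ℕ → ℕ := fun p =>
  if p.1 = 0 ∧ 1 ≤ p.2 ∧ p.2 < k then 2
  else if p.2 = 0 ∧ p.1 + 2 ≤ n - k + 1 then 1
  else if p.2 = 0 ∧ p.1 + 1 = n - k + 1 then 2
  else 0

lemma hook_getD_succ (k t r : ℕ) :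
    (k :: List.replicate t (1:ℕ)).getD (r+1) 0 = if r < t then 1 else 0 := by
  by_cases h : r < t <;> simp [List.getD, List.getElem?_replicate, h]

lemma hook_inD (k t r c : ℕ) :
    InDiagram (t+1) (fun _ => 0) (fun r => (k :: List.replicate t 1).getD r 0) (r, c) ↔
      (r = 0 ∧ c < k) ∨ (1 ≤ r ∧ r ≤ t ∧ c = 0) := by
  unfold InDiagram
  dsimp only
  cases r with
  | zero => simp [List.getD]
  | succ r =>
    rw [hook_getD_succ]
    by_cases h : r < t <;> simp [h] <;> omega

lemma hookT_eq_zero (n k : ℕ) (hk : 1 ≤ k) (r c : ℕ)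
    (h : ¬ InDiagram (n-k+1) (fun _ => 0)
        (fun r => (k :: List.replicate (n-k) 1).getD r 0) (r, c)) :
    hookT n k (r, c) = 0 := by
  rw [hook_inD] at h
  unfold hookT
  dsimp only
  split_ifs with b1 b2 b3 <;> [exfalso; exfalso; exfalso; rfl] <;> omega

lemma hookT_val (n k : ℕ) (r c : ℕ)
    (h : InDiagram (n-k+1) (fun _ => 0)
        (fun r => (k :: List.replicate (n-k) 1).getD r 0) (r, c)) :
    hookT n k (r, c) = 1 ∨ hookT n k (r, c) = 2 := by
  rw [hook_inD] at h
  unfold hookT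
  dsimp only
  split_ifs with b1 b2 b3 <;> omega
lemma hookT_last (n k : ℕ) : hookT n k (n-k, 0) = 2 := by
  unfold hookT
  dsimp only
  split_ifs <;> omega

lemma hookT_mem (n k : ℕ) (hk : 1 ≤ k) (hkn : k ≤ n) :
    hookT n k ∈ gSet [n] (k :: List.replicate (n-k) 1) := by
  have hlen : (k :: List.replicate (n-k) (1:ℕ)).length = (n-k)+1 := by simp
  simp only [gSet, Set.mem_setOf_eq, hlen]
  have hw12 : ∀ x ∈ readingWord ((n-k)+1) (fun _ => 0)
      (fun r => (k :: List.replicate (n-k) 1).getD r 0) (hookT n k), x = 1 ∨ x = 2 := by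
    intro x hx
    obtain ⟨p, hp, rfl⟩ := exists_of_mem_readingWord hx
    obtain ⟨r, c⟩ := p
    exact hookT_val n k r c hp
  have hwrw := hook_readingWord k (n-k) (hookT n k)
  have hlenw : (readingWord ((n-k)+1) (fun _ => 0)
      (fun r => (k :: List.replicate (n-k) 1).getD r 0) (hookT n k)).length = n := by
    rw [hwrw, hook_w_length]; omega
  have hlast : (readingWord ((n-k)+1) (fun _ => 0)
      (fun r => (k :: List.replicate (n-k) 1).getD r 0) (hookT n k))[n-1]? = some 2 := by
    have h := hook_w_last k (n-k) hk (hookT n k)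
    rw [← hwrw, show k+(n-k)-1 = n-1 by omega, hookT_last] at h
    exact h
  refine ⟨⟨?_, ?_, ?_, ?_, ?_, ?_, ?_, ?_⟩, ?_⟩
  · intro p hp
    obtain ⟨r, c⟩ := p
    rcases hookT_val n k r c hp with h | h <;> omega
  · intro p hp
    obtain ⟨r, c⟩ := p
    exact hookT_eq_zero n k hk r c hp
  · intro r c h1 h2
    rw [hook_inD] at h1 h2
    unfold hookT
    dsimp only
    split_ifs <;> omega
  · intro r c h1 h2
    rw [hook_inD] at h1 h2
    unfold hookT
    dsimp only
    split_ifs <;> omega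
  · intro r c1 c2 i hi1 hne hD1 hD2
    rw [hook_inD] at hD1 hD2
    rintro ⟨e1, e2⟩
    unfold hookT at e1 e2
    dsimp only at e1 e2
    split_ifs at e1 e2 <;> omega
  · intro r1 r2 c i hi1 hne hD1 hD2
    rw [hook_inD] at hD1 hD2
    rintro ⟨e1, e2⟩
    unfold hookT at e1 e2
    dsimp only at e1 e2
    split_ifs at e1 e2 <;> omega
  · unfold augWord
    exact lattice_binary _ hw12
  · intro i hi1 p hp
    have hmem : (2*i-1) ∈ readingWord ((n-k)+1) (fun _ => 0)
        (fun r => (k :: List.replicate (n-k) 1).getD r 0) (hookT n k) := by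
      exact List.mem_of_getElem? hp
    have hi' : i = 1 := by rcases hw12 _ hmem with h | h <;> omega
    have hplt : p < n := by
      by_contra hge
      push_neg at hge
      rw [List.getElem?_eq_none (by omega)] at hp
      cases hp
    have hpn : p ≠ n-1 := by
      intro he
      rw [he, hlast] at hp
      have := Option.some.inj hp
      omega
    refine ⟨n-1, by omega, ?_⟩
    rw [hi']
    show _ = some 2
    exact hlast
  · intro i hi1
    exact content_binary _ n hw12 hlenw i hi1
lemma hook_unique (n k : ℕ) (hk : 1 ≤ k) (hkn : k ≤ n) (T : ℕ × ℕ → ℕ)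
    (hT : T ∈ gSet [n] (k :: List.replicate (n-k) 1)) : T = hookT n k := by
  have hlen : (k :: List.replicate (n-k) (1:ℕ)).length = (n-k)+1 := by simp
  simp only [gSet, Set.mem_setOf_eq, hlen] at hT
  obtain ⟨⟨h1, h2, h3, h4, h5, h6, h7, h8⟩, hcon⟩ := hT
  have hw12 : ∀ x ∈ readingWord ((n-k)+1) (fun _ => 0)
      (fun r => (k :: List.replicate (n-k) 1).getD r 0) T, x = 1 ∨ x = 2 := by
    intro x hx
    obtain ⟨p, hp, hpx⟩ := exists_of_mem_readingWord hx
    exact entries_le_two _ _ _ n hcon x hx (hpx ▸ h1 p hp)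
  have hwrw := hook_readingWord k (n-k) T
  have hlenw : (readingWord ((n-k)+1) (fun _ => 0)
      (fun r => (k :: List.replicate (n-k) 1).getD r 0) T).length = n := by
    rw [hwrw, hook_w_length]; omega
  -- entries in the first column above the last row are 1
  have F3 : ∀ r, r + 2 ≤ n - k + 1 → T (r, 0) = 1 := by
    intro r hr
    have hD1 : InDiagram ((n-k)+1) (fun _ => 0)
        (fun r => (k :: List.replicate (n-k) 1).getD r 0) (r, 0) :=
      (hook_inD k (n-k) r 0).2 (by omega)
    have hD2 : InDiagram ((n-k)+1) (fun _ => 0)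
        (fun r => (k :: List.replicate (n-k) 1).getD r 0) (r+1, 0) :=
      (hook_inD k (n-k) (r+1) 0).2 (by omega)
    have hv1 := hw12 _ (mem_readingWord_of_inDiagram _ _ _ T hD1)
    have hv2 := hw12 _ (mem_readingWord_of_inDiagram _ _ _ T hD2)
    by_contra hne
    have e1 : T (r, 0) = 2 := by omega
    have e2 : T (r+1, 0) = 2 := by
      have := h4 r 0 hD1 hD2
      omega
    exact h6 r (r+1) 0 1 le_rfl (by omega) hD1 hD2 ⟨by omega, by omega⟩
  -- the last entry of the first column is 2
  have F4 : T (n-k, 0) = 2 := by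
    have hDl : InDiagram ((n-k)+1) (fun _ => 0)
        (fun r => (k :: List.replicate (n-k) 1).getD r 0) (n-k, 0) :=
      (hook_inD k (n-k) (n-k) 0).2 (by omega)
    have hv := hw12 _ (mem_readingWord_of_inDiagram _ _ _ T hDl)
    by_contra hne
    have e1 : T (n-k, 0) = 1 := by omega
    have hlast : (readingWord ((n-k)+1) (fun _ => 0)
        (fun r => (k :: List.replicate (n-k) 1).getD r 0) T)[n-1]? = some (2*1-1) := by
      have h := hook_w_last k (n-k) hk T
      rw [← hwrw, show k+(n-k)-1 = n-1 by omega, e1] at h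
      exact h
    obtain ⟨q, hq1, hq2⟩ := h8 1 le_rfl (n-1) hlast
    have : q < n := by
      by_contra hge
      push_neg at hge
      rw [List.getElem?_eq_none (by omega)] at hq2
      cases hq2
    omega
  -- entries of the first row beyond the corner are 2
  have F5 : ∀ c, 1 ≤ c → c < k → T (0, c) = 2 := by
    intro c hc1 hc2
    have hD : InDiagram ((n-k)+1) (fun _ => 0)
        (fun r => (k :: List.replicate (n-k) 1).getD r 0) (0, c) :=
      (hook_inD k (n-k) 0 c).2 (by omega)
    have hv := hw12 _ (mem_readingWord_of_inDiagram _ _ _ T hD)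
    by_contra hne
    have e1 : T (0, c) = 1 := by omega
    rcases Nat.lt_or_ge k n with hlt | hge
    · -- n - k ≥ 1, so T (0,0) = 1, contradicting one marked letter per row
      have h00 : T (0, 0) = 1 := F3 0 (by omega)
      have hD0 : InDiagram ((n-k)+1) (fun _ => 0)
          (fun r => (k :: List.replicate (n-k) 1).getD r 0) (0, 0) :=
        (hook_inD k (n-k) 0 0).2 (by omega)
      exact h5 0 0 c 1 le_rfl (by omega) hD0 hD ⟨by omega, by omega⟩
    · -- k = n : single row
      have hkn' : k = n := by omega
      have hidx : (readingWord ((n-k)+1) (fun _ => 0)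
          (fun r => (k :: List.replicate (n-k) 1).getD r 0) T)[k-1-c]? = some (2*1-1) := by
        have h := hook_w_get0 k (n-k) (k-1-c) (by omega) T
        rw [← hwrw, show k-1-(k-1-c) = c by omega, e1] at h
        exact h
      obtain ⟨q, hq1, hq2⟩ := h8 1 le_rfl (k-1-c) hidx
      have hqn : q < n := by
        by_contra hge2
        push_neg at hge2
        rw [List.getElem?_eq_none (by omega)] at hq2
        cases hq2
      have hqk : q < k := by omega
      have hq3 : (readingWord ((n-k)+1) (fun _ => 0)
          (fun r => (k :: List.replicate (n-k) 1).getD r 0) T)[q]? = some (T (0, k-1-q)) := by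
        have h := hook_w_get0 k (n-k) q hqk T
        rw [← hwrw] at h
        exact h
      rw [hq3] at hq2
      have hval : T (0, k-1-q) = 2 := by
        have := Option.some.inj hq2
        omega
      have hmono := rowMono ((n-k)+1)
        (fun r => (k :: List.replicate (n-k) 1).getD r 0) T h3 0 (k-1-q) (c - (k-1-q))
        (by rw [show (k-1-q) + (c - (k-1-q)) = c by omega]; exact hD)
      rw [show (k-1-q) + (c - (k-1-q)) = c by omega] at hmono
      omega
  funext p
  obtain ⟨r, c⟩ := p
  by_cases hD : InDiagram ((n-k)+1) (fun _ => 0)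
      (fun r => (k :: List.replicate (n-k) 1).getD r 0) (r, c)
  · have hD' := (hook_inD k (n-k) r c).1 hD
    unfold hookT
    dsimp only
    split_ifs with b1 b2 b3
    · obtain ⟨rfl, hc1, hc2⟩ := b1
      exact F5 c hc1 hc2
    · obtain ⟨rfl, hr⟩ := b2
      exact F3 r hr
    · obtain ⟨rfl, hr⟩ := b3
      rw [show r = n - k by omega]
      exact F4
    · exfalso
      omega
  · rw [h2 (r, c) hD, hookT_eq_zero n k hk r c hD]
lemma nonhook_empty (n : ℕ) (hn : 1 ≤ n) (mu : List ℕ) (hmu : IsPartitionList mu)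
    (hmun : mu.sum = n)
    (hnh : ¬ ∃ k : ℕ, 1 ≤ k ∧ k ≤ n ∧ mu = k :: List.replicate (n-k) 1) :
    gSet [n] mu = ∅ := by
  obtain ⟨hsort, hpos⟩ := hmu
  cases mu with
  | nil => simp at hmun; omega
  | cons a l =>
  by_cases hall : ∀ x ∈ l, x = 1
  · exfalso
    apply hnh
    have hl : l = List.replicate l.length 1 := List.eq_replicate_of_mem hall
    have hsum : a + l.length = n := by
      rw [List.sum_cons, hl] at hmun
      simpa using hmun
    have ha1 : 1 ≤ a := hpos a (List.mem_cons_self)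
    refine ⟨a, ha1, by omega, ?_⟩
    rw [show n - a = l.length by omega, ← hl]
  · push_neg at hall
    obtain ⟨x, hxl, hx1⟩ := hall
    have hx2 : 2 ≤ x := by
      have := hpos x (List.mem_cons_of_mem a hxl)
      omega
    cases l with
    | nil => exact absurd hxl List.not_mem_nil
    | cons b l' =>
    obtain ⟨ha, hs2⟩ := List.pairwise_cons.1 hsort
    obtain ⟨hb, _⟩ := List.pairwise_cons.1 hs2
    have hbx : x ≤ b := by
      rcases List.mem_cons.1 hxl with h | h
      · omega
      · exact hb x h
    have hab : b ≤ a := ha b (List.mem_cons_self)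
    have hb2 : 2 ≤ b := by omega
    rw [Set.eq_empty_iff_forall_notMem]
    intro T hT
    simp only [gSet, Set.mem_setOf_eq] at hT
    obtain ⟨⟨h1, h2, h3, h4, h5, h6, h7, h8⟩, hcon⟩ := hT
    have hlen2 : 2 ≤ (a :: b :: l').length := by simp
    have D00 : InDiagram (a :: b :: l').length (fun _ => 0)
        (fun r => (a :: b :: l').getD r 0) (0, 0) :=
      ⟨by omega, Nat.zero_le _, show 0 < a by omega⟩
    have D01 : InDiagram (a :: b :: l').length (fun _ => 0)
        (fun r => (a :: b :: l').getD r 0) (0, 1) :=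
      ⟨by omega, Nat.zero_le _, show 1 < a by omega⟩
    have D10 : InDiagram (a :: b :: l').length (fun _ => 0)
        (fun r => (a :: b :: l').getD r 0) (1, 0) :=
      ⟨by omega, Nat.zero_le _, show 0 < b by omega⟩
    have D11 : InDiagram (a :: b :: l').length (fun _ => 0)
        (fun r => (a :: b :: l').getD r 0) (1, 1) :=
      ⟨by omega, Nat.zero_le _, show 1 < b by omega⟩
    have hw12 : ∀ y ∈ readingWord (a :: b :: l').length (fun _ => 0)
        (fun r => (a :: b :: l').getD r 0) T, y = 1 ∨ y = 2 := by
      intro y hy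
      obtain ⟨p, hp, hpy⟩ := exists_of_mem_readingWord hy
      exact entries_le_two _ _ _ n hcon y hy (hpy ▸ h1 p hp)
    have v00 := hw12 _ (mem_readingWord_of_inDiagram _ _ _ T D00)
    have v01 := hw12 _ (mem_readingWord_of_inDiagram _ _ _ T D01)
    have v10 := hw12 _ (mem_readingWord_of_inDiagram _ _ _ T D10)
    have v11 := hw12 _ (mem_readingWord_of_inDiagram _ _ _ T D11)
    have m0 : T (0,0) ≤ T (0,1) := h3 0 0 D00 D01
    have m1 : T (1,0) ≤ T (1,1) := h3 1 0 D10 D11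
    have A5a := h5 0 0 1 1 le_rfl (by omega) D00 D01
    have A5b := h5 1 0 1 1 le_rfl (by omega) D10 D11
    have A6 := h6 0 1 1 1 le_rfl (by omega) D01 D11
    omega

/-- Proposition 3.2, first part: for `n ≥ 1` and a partition `μ` of `n`,
`g_{(n)μ} = 1` if `μ` is a hook `(k, 1^{n-k})` with `1 ≤ k ≤ n`, and
`g_{(n)μ} = 0` otherwise.  (Equivalently, `P_n = Σ_{1 ≤ k ≤ n} s_{k1^{n-k}}`.) -/
theorem gCoeff_row (n : ℕ) (hn : 1 ≤ n) (mu : List ℕ)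
    (hmu : IsPartitionList mu) (hmun : mu.sum = n) :
    ((∃ k : ℕ, 1 ≤ k ∧ k ≤ n ∧ mu = k :: List.replicate (n - k) 1) →
        gCoeff [n] mu = 1) ∧
    (¬ (∃ k : ℕ, 1 ≤ k ∧ k ≤ n ∧ mu = k :: List.replicate (n - k) 1) →
        gCoeff [n] mu = 0) := by
  constructor
  · rintro ⟨k, hk1, hk2, rfl⟩
    have hset : gSet [n] (k :: List.replicate (n-k) 1) = {hookT n k} :=
      Set.eq_singleton_iff_unique_mem.2
        ⟨hookT_mem n k hk1 hk2, fun T hT => hook_unique n k hk1 hk2 T hT⟩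
    rw [gCoeff, hset, Set.ncard_singleton]
  · intro hnh
    rw [gCoeff, nonhook_empty n hn mu hmu hmun hnh, Set.ncard_empty]
end

section
/- For every k ≥ 5, g_{νμ} ≥ 2 where ν = (k, k−2, k−3, …, 4, 3, 1) and μ = (k−1, k−2, …, 4, 3, 2) (both are partitions of k(k−1)/2 − 1 and ν is strict). That is, there are at least two amenable tableaux of shape μ and content ν. -/
open List
set_option maxHeartbeats 2000000
set_option linter.unusedVariables false

/-- relative lattice condition with accumulated prefix `a` -/
def LatFrom (a w : List ℕ) : Prop :=
  ∀ (p : List ℕ) (x : ℕ), p ++ [x] <+: w → ∀ i : ℕ, 1 ≤ i →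
    (a ++ p).count (2 * i) = (a ++ p).count (2 * (i + 1)) →
      x ≠ 2 * (i + 1) ∧ x ≠ 2 * i + 1

open List

lemma snoc_prefix_append {p : List ℕ} {x : ℕ} {u v : List ℕ}
    (h : p ++ [x] <+: u ++ v) :
    (p ++ [x] <+: u) ∨ ∃ q, p = u ++ q ∧ q ++ [x] <+: v := by
  rcases le_or_gt (p.length + 1) u.length with hle | hlt
  · left
    exact List.prefix_of_prefix_length_le h (List.prefix_append u v)
      (by simpa using hle)
  · right
    have hpu : u <+: p :=
      List.prefix_of_prefix_length_le (List.prefix_append u v)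
        ((List.prefix_append p [x]).trans h) (by omega)
    obtain ⟨q, rfl⟩ := hpu
    refine ⟨q, rfl, ?_⟩
    obtain ⟨t, ht⟩ := h
    rw [List.append_assoc, List.append_assoc] at ht
    exact ⟨t, by simpa using (List.append_cancel_left ht)⟩

lemma latFrom_append {a u v : List ℕ} (h1 : LatFrom a u) (h2 : LatFrom (a ++ u) v) :
    LatFrom a (u ++ v) := by
  intro p x hp i hi hc
  rcases snoc_prefix_append hp with h | ⟨q, rfl, hq⟩
  · exact h1 p x h i hi hc
  · refine h2 q x hq i hi ?_
    rwa [← List.append_assoc] at hc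

lemma latFrom_nil {a : List ℕ} : LatFrom a [] := by
  intro p x hp i hi hc
  have := hp.length_le
  simp at this

lemma latFrom_single {a : List ℕ} {x : ℕ}
    (H : ∀ i : ℕ, 1 ≤ i → a.count (2 * i) = a.count (2 * (i + 1)) →
      x ≠ 2 * (i + 1) ∧ x ≠ 2 * i + 1) : LatFrom a [x] := by
  intro p y hp i hi hc
  have hlen := hp.length_le
  simp at hlen
  have hp0 : p = [] := by
    cases p with
    | nil => rfl
    | cons b l => simp at hlen
  subst hp0
  simp at hp
  subst hp
  exact H i hi (by simpa using hc)

lemma latFrom_replicate {a : List ℕ} {m v : ℕ}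
    (H : ∀ t i : ℕ, t < m → 1 ≤ i →
      a.count (2 * i) + (if v = 2 * i then t else 0)
        = a.count (2 * (i + 1)) + (if v = 2 * (i + 1) then t else 0) →
      v ≠ 2 * (i + 1) ∧ v ≠ 2 * i + 1) : LatFrom a (replicate m v) := by
  intro p x hp i hi hc
  have hmem : ∀ b ∈ p ++ [x], b = v := fun b hb =>
    List.eq_of_mem_replicate (hp.subset hb)
  have hx : x = v := hmem x (by simp)
  have hprep : p = replicate p.length v :=
    List.eq_replicate_of_mem (fun b hb => hmem b (by simp [hb]))
  have hlen : p.length < m := by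
    have := hp.length_le
    simp at this
    omega
  subst hx
  refine H p.length i hlen hi ?_
  rw [List.count_append, List.count_append] at hc
  rw [hprep] at hc
  simpa [List.count_replicate, beq_iff_eq] using hc

lemma flatMap_range_succ (B : ℕ → List ℕ) (n : ℕ) :
    (range (n + 1)).flatMap B = (range n).flatMap B ++ B n := by
  rw [List.range_succ, List.flatMap_append]
  simp

lemma latFrom_flatMap {a : List ℕ} {B : ℕ → List ℕ} {n : ℕ}
    (H : ∀ j, j < n → LatFrom (a ++ (range j).flatMap B) (B j)) :
    LatFrom a ((range n).flatMap B) := by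
  induction n with
  | zero => simpa using latFrom_nil
  | succ n ih =>
      rw [flatMap_range_succ]
      exact latFrom_append (ih fun j hj => H j (by omega)) (H n (by omega))

lemma reverse_flatMap_range (B : ℕ → List ℕ) (n : ℕ) :
    ((range n).flatMap B).reverse
      = (range n).flatMap (fun j => (B (n - 1 - j)).reverse) := by
  induction n with
  | zero => simp
  | succ n ih =>
      rw [flatMap_range_succ, List.reverse_append, ih]
      conv_rhs => rw [List.range_succ_eq_map, List.flatMap_cons, List.flatMap_map]
      have hfg : (fun a => (B (n + 1 - 1 - Nat.succ a)).reverse)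
          = (fun j => (B (n - 1 - j)).reverse) := by
        funext j
        have h2 : n + 1 - 1 - Nat.succ j = n - 1 - j := by omega
        rw [h2]
      rw [hfg]
      norm_num

lemma isLatticeWord_of_latFrom {w : List ℕ} (h : LatFrom [] w) : IsLatticeWord w := by
  intro p x hp i hi hc
  exact h p x hp i hi (by simpa using hc)

lemma flatMap_range_split (B : ℕ → List ℕ) {n j : ℕ} (h : j ≤ n) :
    (range n).flatMap B
      = (range j).flatMap B ++ (range (n - j)).flatMap (fun t => B (j + t)) := by
  have h1 : n = j + (n - j) := by omega
  conv_lhs => rw [h1, List.range_add, List.flatMap_append, List.flatMap_map]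

lemma exists_later {a b : List ℕ} {u v : ℕ} (hu : u ∉ b) (hv : v ∈ b) :
    ∀ p : ℕ, (a ++ b)[p]? = some u → ∃ q, p < q ∧ (a ++ b)[q]? = some v := by
  intro p hp
  have hpa : p < a.length := by
    by_contra hge
    push_neg at hge
    rw [List.getElem?_append_right hge] at hp
    exact hu (by
      have := List.getElem?_eq_some_iff.mp hp
      obtain ⟨h1, h2⟩ := this
      exact h2 ▸ List.getElem_mem h1)
  obtain ⟨j, hj, hbj⟩ := List.getElem_of_mem hv
  refine ⟨a.length + j, by omega, ?_⟩
  rw [List.getElem?_append_right (by omega)]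
  simp only [Nat.add_sub_cancel_left]
  rw [List.getElem?_eq_getElem hj, hbj]

lemma revRowMap (g : ℕ → ℕ) (v : ℕ) :
    ∀ t : ℕ, (∀ c, 1 ≤ c → c < t + 1 → g c = v) →
      ((List.range' 0 (t + 1)).reverse).map g = List.replicate t v ++ [g 0] := by
  intro t
  induction t with
  | zero => intro _; simp
  | succ t ih =>
      intro h
      rw [List.range'_concat, List.reverse_append]
      simp only [List.reverse_cons, List.reverse_nil, List.nil_append, List.map_cons,
        List.map_append]
      rw [ih (fun c h1 h2 => h c h1 (by omega))]
      rw [h (0 + 1 * (t + 1)) (by omega) (by omega)]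
      simp [List.replicate_succ]

lemma revRowMap2 (g : ℕ → ℕ) (v : ℕ) :
    ∀ t : ℕ, (∀ c, 2 ≤ c → c < t + 2 → g c = v) →
      ((List.range' 0 (t + 2)).reverse).map g
        = List.replicate t v ++ [g 1, g 0] := by
  intro t
  induction t with
  | zero =>
      intro _
      have : List.range' 0 2 = [0, 1] := by decide
      rw [this]
      simp
  | succ t ih =>
      intro h
      rw [List.range'_concat, List.reverse_append]
      simp only [List.reverse_cons, List.reverse_nil, List.nil_append, List.map_cons,
        List.map_append]
      rw [ih (fun c h1 h2 => h c h1 (by omega))]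
      rw [h (0 + 1 * (t + 2)) (by omega) (by omega)]
      simp [List.replicate_succ]

lemma flatMap_congr {α β : Type*} {l : List α} {f g : α → List β}
    (h : ∀ a ∈ l, f a = g a) : l.flatMap f = l.flatMap g := by
  induction l with
  | nil => simp
  | cons a l ih =>
      simp only [List.flatMap_cons]
      rw [h a (by simp), ih (fun b hb => h b (by simp [hb]))]

def B1 (k r : ℕ) : List ℕ :=
  if r = 0 then replicate (k-2) 2 ++ [1]
  else replicate (k-2-r) (2*r+2) ++ [2*r]

def B2 (k r : ℕ) : List ℕ :=
  if r = 0 then replicate (k-2) 2 ++ [1]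
  else if r ≤ k-4 then replicate (k-3-r) (2*r+2) ++ [2*r+1, 2*r]
  else replicate (k-2-r) (2*r+2) ++ [2*r]

def W1pre (k j : ℕ) : List ℕ := (range j).flatMap (B1 k)
def W2pre (k j : ℕ) : List ℕ := (range j).flatMap (B2 k)

lemma flatMap_range_succ'_s12 (B : ℕ → List ℕ) (n : ℕ) :
    (range (n + 1)).flatMap B = (range n).flatMap B ++ B n := by
  rw [List.range_succ, List.flatMap_append]; simp

lemma countB1even (k j i : ℕ) (hi : 1 ≤ i) :
    (B1 k j).count (2*i)
      = (if j = 0 ∧ i = 1 then k-2 else 0)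
        + (if 1 ≤ j ∧ i = j+1 then k-2-j else 0)
        + (if 1 ≤ j ∧ i = j then 1 else 0) := by
  unfold B1
  rcases Nat.eq_zero_or_pos j with rfl | hj
  · rw [if_pos rfl]
    simp only [List.count_append, List.count_replicate, List.count_singleton',
      List.count_cons, beq_iff_eq, List.count_nil, eq_self_iff_true, true_and, and_true]
    split_ifs <;> omega
  · rw [if_neg (by omega)]
    simp only [List.count_append, List.count_replicate, List.count_singleton',
      List.count_cons, beq_iff_eq, List.count_nil, eq_self_iff_true, true_and, and_true]
    split_ifs <;> omega

lemma countB2even (k j i : ℕ) (hk : 5 ≤ k) (hi : 1 ≤ i) (hj : j < k-2) :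
    (B2 k j).count (2*i)
      = (if j = 0 ∧ i = 1 then k-2 else 0)
        + (if 1 ≤ j ∧ j ≤ k-4 ∧ i = j+1 then k-3-j else 0)
        + (if j = k-3 ∧ i = k-2 then 1 else 0)
        + (if 1 ≤ j ∧ i = j then 1 else 0) := by
  unfold B2
  rcases Nat.eq_zero_or_pos j with rfl | hj1
  · rw [if_pos rfl]
    simp only [List.count_append, List.count_replicate, List.count_singleton',
      List.count_cons, beq_iff_eq, List.count_nil, eq_self_iff_true, true_and, and_true]
    split_ifs <;> omega
  · rw [if_neg (by omega)]
    by_cases hj4 : j ≤ k-4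
    · rw [if_pos hj4]
      simp only [List.count_append, List.count_replicate, List.count_singleton',
        List.count_cons, beq_iff_eq, List.count_nil, eq_self_iff_true, true_and, and_true]
      split_ifs <;> omega
    · rw [if_neg hj4]
      have hj3 : j = k-3 := by omega
      simp [List.count_append, List.count_replicate, List.count_singleton']
      split_ifs <;> omega

lemma countW1pre (k : ℕ) (hk : 5 ≤ k) :
    ∀ j, j ≤ k-2 → ∀ i, 1 ≤ i →
      (W1pre k j).count (2*i)
        = (if i = 1 ∧ 1 ≤ j then k-2 else 0)
          + (if 2 ≤ i ∧ i-1 < j then k-1-i else 0)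
          + (if i < j then 1 else 0) := by
  intro j
  induction j with
  | zero => intro _ i hi; simp [W1pre]
  | succ j ih =>
      intro hj i hi
      rw [W1pre, flatMap_range_succ'_s12, List.count_append, ← W1pre,
        ih (by omega) i hi, countB1even k j i hi]
      split_ifs <;> omega

lemma countW2pre (k : ℕ) (hk : 5 ≤ k) :
    ∀ j, j ≤ k-2 → ∀ i, 1 ≤ i →
      (W2pre k j).count (2*i)
        = (if i = 1 ∧ 1 ≤ j then k-2 else 0)
          + (if 2 ≤ i ∧ i ≤ k-3 ∧ i-1 < j then k-2-i else 0)
          + (if i = k-2 ∧ k-3 < j then 1 else 0)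
          + (if 1 ≤ i ∧ i < j then 1 else 0) := by
  intro j
  induction j with
  | zero => intro _ i hi; simp [W2pre]
  | succ j ih =>
      intro hj i hi
      rw [W2pre, flatMap_range_succ'_s12, List.count_append, ← W2pre,
        ih (by omega) i hi, countB2even k j i hk hi (by omega)]
      split_ifs <;> omega

lemma countB1odd (k j x : ℕ) (hx : x % 2 = 1) :
    (B1 k j).count x = if j = 0 ∧ x = 1 then 1 else 0 := by
  unfold B1
  rcases Nat.eq_zero_or_pos j with rfl | hj
  · rw [if_pos rfl]
    simp only [List.count_append, List.count_replicate, List.count_singleton',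
      List.count_cons, beq_iff_eq, List.count_nil, eq_self_iff_true, true_and, and_true]
    split_ifs <;> omega
  · rw [if_neg (by omega)]
    simp only [List.count_append, List.count_replicate, List.count_singleton',
      List.count_cons, beq_iff_eq, List.count_nil, eq_self_iff_true, true_and, and_true]
    split_ifs <;> omega

lemma countB2odd (k j x : ℕ) (hx : x % 2 = 1) :
    (B2 k j).count x
      = (if j = 0 ∧ x = 1 then 1 else 0)
        + (if 1 ≤ j ∧ j ≤ k-4 ∧ x = 2*j+1 then 1 else 0) := by
  unfold B2
  rcases Nat.eq_zero_or_pos j with rfl | hj1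
  · rw [if_pos rfl]
    simp only [List.count_append, List.count_replicate, List.count_singleton',
      List.count_cons, beq_iff_eq, List.count_nil, eq_self_iff_true, true_and, and_true]
    split_ifs <;> omega
  · rw [if_neg (by omega)]
    by_cases hj4 : j ≤ k-4
    · rw [if_pos hj4]
      simp only [List.count_append, List.count_replicate, List.count_singleton',
        List.count_cons, beq_iff_eq, List.count_nil, eq_self_iff_true, true_and, and_true]
      split_ifs <;> omega
    · rw [if_neg hj4]
      simp [List.count_append, List.count_replicate, List.count_singleton']
      split_ifs <;> omega

lemma countW1preOdd (k : ℕ) (hk : 5 ≤ k) :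
    ∀ j, j ≤ k-2 → ∀ x, x % 2 = 1 →
      (W1pre k j).count x = if x = 1 ∧ 1 ≤ j then 1 else 0 := by
  intro j
  induction j with
  | zero => intro _ x hx; simp [W1pre]
  | succ j ih =>
      intro hj x hx
      rw [W1pre, flatMap_range_succ'_s12, List.count_append, ← W1pre,
        ih (by omega) x hx, countB1odd k j x hx]
      split_ifs <;> omega

lemma countW2preOdd (k : ℕ) (hk : 5 ≤ k) :
    ∀ j, j ≤ k-2 → ∀ x, x % 2 = 1 →
      (W2pre k j).count x
        = (if x = 1 ∧ 1 ≤ j then 1 else 0)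
          + (if 3 ≤ x ∧ x ≤ 2*k-7 ∧ (x-1)/2 < j then 1 else 0) := by
  intro j
  induction j with
  | zero => intro _ x hx; simp [W2pre]
  | succ j ih =>
      intro hj x hx
      rw [W2pre, flatMap_range_succ'_s12, List.count_append, ← W2pre,
        ih (by omega) x hx, countB2odd k j x hx]
      split_ifs <;> omega

def A1 (k j : ℕ) : List ℕ := ((B1 k (k-3-j)).reverse).map (· + 1)
def A2 (k j : ℕ) : List ℕ := ((B2 k (k-3-j)).reverse).map (· + 1)
def A1pre (k j : ℕ) : List ℕ := (range j).flatMap (A1 k)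
def A2pre (k j : ℕ) : List ℕ := (range j).flatMap (A2 k)

lemma B1pos (k r : ℕ) (hr : 1 ≤ r) :
    B1 k r = replicate (k-2-r) (2*r+2) ++ [2*r] := by
  unfold B1; rw [if_neg (by omega)]

lemma B2mid (k r : ℕ) (hr : 1 ≤ r) (hr2 : r ≤ k-4) :
    B2 k r = replicate (k-3-r) (2*r+2) ++ [2*r+1, 2*r] := by
  unfold B2; rw [if_neg (by omega), if_pos hr2]

lemma B2top (k : ℕ) (hk : 5 ≤ k) :
    B2 k (k-3) = replicate 1 (2*(k-3)+2) ++ [2*(k-3)] := by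
  unfold B2
  rw [if_neg (by omega), if_neg (by omega)]
  congr 2
  omega

lemma A1blockPos (k j : ℕ) (hk : 5 ≤ k) (hj : j ≤ k-4) :
    A1 k j = (2*(k-3-j)+1) :: replicate (k-2-(k-3-j)) (2*(k-3-j)+3) := by
  unfold A1
  rw [B1pos k (k-3-j) (by omega)]
  simp [List.reverse_append, List.replicate_succ]

lemma A1blockTop (k : ℕ) (hk : 5 ≤ k) :
    A1 k (k-3) = 2 :: replicate (k-2) 3 := by
  unfold A1
  have : k-3-(k-3) = 0 := by omega
  rw [this]
  unfold B1
  rw [if_pos rfl]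
  simp [List.reverse_append]

lemma A2blockPos (k j : ℕ) (hk : 5 ≤ k) (hj1 : 1 ≤ j) (hj : j ≤ k-4) :
    A2 k j = (2*(k-3-j)+1) :: (2*(k-3-j)+2) :: replicate (k-3-(k-3-j)) (2*(k-3-j)+3) := by
  unfold A2
  rw [B2mid k (k-3-j) (by omega) (by omega)]
  simp [List.reverse_append, List.replicate_succ]

lemma A2block0 (k : ℕ) (hk : 5 ≤ k) :
    A2 k 0 = (2*(k-3)+1) :: [2*(k-3)+3] := by
  unfold A2
  have h0 : k-3-0 = k-3 := by omega
  rw [h0, B2top k hk]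
  simp [List.reverse_append]

lemma A2blockTop (k : ℕ) (hk : 5 ≤ k) :
    A2 k (k-3) = 2 :: replicate (k-2) 3 := by
  unfold A2
  have : k-3-(k-3) = 0 := by omega
  rw [this]
  unfold B2
  rw [if_pos rfl]
  simp [List.reverse_append]

lemma countA1pre (k : ℕ) (hk : 5 ≤ k) :
    ∀ j, j ≤ k-2 → ∀ i, 1 ≤ i →
      (A1pre k j).count (2*i) = if i = 1 ∧ k-3 < j then 1 else 0 := by
  intro j
  induction j with
  | zero => intro _ i hi; simp [A1pre]
  | succ j ih =>
      intro hj i hi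
      rw [A1pre, List.range_succ, List.flatMap_append, List.count_append, List.flatMap_cons,
        List.flatMap_nil, List.append_nil, ← A1pre, ih (by omega) i hi]
      rcases le_or_gt j (k-4) with hc | hc
      · rw [A1blockPos k j hk hc]
        simp only [List.count_cons, List.count_replicate, beq_iff_eq, List.count_nil]
        split_ifs <;> omega
      · have hj3 : j = k-3 := by omega
        subst hj3
        rw [A1blockTop k hk]
        simp only [List.count_cons, List.count_replicate, beq_iff_eq, List.count_nil]
        split_ifs <;> omega

lemma countA2pre (k : ℕ) (hk : 5 ≤ k) :
    ∀ j, j ≤ k-2 → ∀ i, 1 ≤ i →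
      (A2pre k j).count (2*i)
        = (if 2 ≤ i ∧ i ≤ k-3 ∧ k-2-i < j then 1 else 0)
          + (if i = 1 ∧ k-3 < j then 1 else 0) := by
  intro j
  induction j with
  | zero => intro _ i hi; simp [A2pre]
  | succ j ih =>
      intro hj i hi
      rw [A2pre, List.range_succ, List.flatMap_append, List.count_append, List.flatMap_cons,
        List.flatMap_nil, List.append_nil, ← A2pre, ih (by omega) i hi]
      rcases Nat.eq_zero_or_pos j with rfl | hj1
      · rw [A2block0 k hk]
        simp only [List.count_cons, List.count_replicate, beq_iff_eq, List.count_nil,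
          List.count_singleton']
        split_ifs <;> omega
      · rcases le_or_gt j (k-4) with hc | hc
        · rw [A2blockPos k j hk hj1 hc]
          simp only [List.count_cons, List.count_replicate, beq_iff_eq, List.count_nil]
          split_ifs <;> omega
        · have hj3 : j = k-3 := by omega
          subst hj3
          rw [A2blockTop k hk]
          simp only [List.count_cons, List.count_replicate, beq_iff_eq, List.count_nil]
          split_ifs <;> omega


lemma latFrom_single' {a : List ℕ} {x : ℕ}
    (H : ∀ i : ℕ, 1 ≤ i → (x = 2*(i+1) ∨ x = 2*i+1) →
      a.count (2 * i) ≠ a.count (2 * (i + 1))) : LatFrom a [x] :=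
  latFrom_single (fun i hi hc =>
    ⟨fun he => absurd hc (H i hi (Or.inl he)),
     fun he => absurd hc (H i hi (Or.inr he))⟩)

lemma latFrom_replicate' {a : List ℕ} {m v : ℕ}
    (H : ∀ t i : ℕ, t < m → 1 ≤ i → (v = 2*(i+1) ∨ v = 2*i+1) →
      a.count (2 * i) + (if v = 2 * i then t else 0)
        ≠ a.count (2 * (i + 1)) + (if v = 2 * (i + 1) then t else 0)) :
    LatFrom a (replicate m v) :=
  latFrom_replicate (fun t i ht hi hc =>
    ⟨fun he => absurd hc (H t i ht hi (Or.inl he)),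
     fun he => absurd hc (H t i ht hi (Or.inr he))⟩)

lemma latW1block (k j : ℕ) (hk : 5 ≤ k) (hj : j < k-2) :
    LatFrom (W1pre k j) (B1 k j) := by
  rcases Nat.eq_zero_or_pos j with rfl | hj1
  · show LatFrom _ (replicate (k-2) 2 ++ [1])
    refine latFrom_append (latFrom_replicate' ?_) (latFrom_single' ?_)
    · intro t i ht hi hv; exfalso; omega
    · intro i hi hv; exfalso; omega
  · rw [B1pos k j hj1]
    refine latFrom_append (latFrom_replicate' ?_) (latFrom_single' ?_)
    · intro t i ht hi hv
      have hieq : i = j := by omega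
      subst hieq
      have c1 : (W1pre k i).count (2*i) = if i = 1 then k-2 else k-1-i := by
        rw [countW1pre k hk i (by omega) i (by omega)]
        split_ifs <;> omega
      have c2 : (W1pre k i).count (2*(i+1)) = 0 := by
        rw [countW1pre k hk i (by omega) (i+1) (by omega)]
        split_ifs <;> omega
      rw [c1, c2]
      split_ifs <;> omega
    · intro i hi hv
      have h2 : 2 ≤ j := by omega
      have hieq : i = j - 1 := by omega
      subst hieq
      have c1 : (W1pre k j).count (2*(j-1)) = (if j = 2 then k-2 else k-j) + 1 := by
        rw [countW1pre k hk j (by omega) (j-1) (by omega)]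
        split_ifs <;> omega
      have c2 : (W1pre k j).count (2*(j-1+1)) = k-1-j := by
        rw [countW1pre k hk j (by omega) (j-1+1) (by omega)]
        split_ifs <;> omega
      simp only [List.count_append, List.count_replicate, beq_iff_eq]
      rw [c1, c2]
      split_ifs <;> omega

lemma latA1block (k j : ℕ) (hk : 5 ≤ k) (hj : j < k-2) :
    LatFrom (W1pre k (k-2) ++ A1pre k j) (A1 k j) := by
  have hA1 : ∀ i, 1 ≤ i → (A1pre k j).count (2*i) = 0 := by
    intro i hi
    rw [countA1pre k hk j (by omega) i hi]
    split_ifs <;> omega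
  rcases le_or_gt j (k-4) with hc | hc
  · rw [A1blockPos k j hk hc, ← List.singleton_append]
    refine latFrom_append (latFrom_single' ?_) (latFrom_replicate' ?_)
    · intro i hi hv
      have hieq : i = k-3-j := by omega
      subst hieq
      have f1 : (W1pre k (k-2)).count (2*(k-3-j)) = if j = k-4 then k-1 else j+3 := by
        rw [countW1pre k hk (k-2) le_rfl (k-3-j) (by omega)]
        split_ifs <;> omega
      have f2 : (W1pre k (k-2)).count (2*(k-3-j+1)) = if j = 0 then 1 else j+2 := by
        rw [countW1pre k hk (k-2) le_rfl (k-3-j+1) (by omega)]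
        split_ifs <;> omega
      simp only [List.count_append]
      rw [f1, f2, hA1 _ (by omega), hA1 _ (by omega)]
      split_ifs <;> omega
    · intro t i ht hi hv
      have hieq : i = k-3-j+1 := by omega
      subst hieq
      have f2 : (W1pre k (k-2)).count (2*(k-3-j+1)) = if j = 0 then 1 else j+2 := by
        rw [countW1pre k hk (k-2) le_rfl (k-3-j+1) (by omega)]
        split_ifs <;> omega
      have f3 : (W1pre k (k-2)).count (2*(k-3-j+1+1))
          = if j = 0 then 0 else if j = 1 then 1 else j+1 := by
        rw [countW1pre k hk (k-2) le_rfl (k-3-j+1+1) (by omega)]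
        split_ifs <;> omega
      simp only [List.count_append, List.count_singleton', List.count_replicate, beq_iff_eq]
      rw [f2, f3, hA1 _ (by omega), hA1 _ (by omega)]
      split_ifs <;> omega
  · have hj3 : j = k-3 := by omega
    subst hj3
    rw [A1blockTop k hk, ← List.singleton_append]
    refine latFrom_append (latFrom_single' ?_) (latFrom_replicate' ?_)
    · intro i hi hv; exfalso; omega
    · intro t i ht hi hv
      have hieq : i = 1 := by omega
      subst hieq
      have f4 : (W1pre k (k-2)).count (2*1) = k-1 := by
        rw [countW1pre k hk (k-2) le_rfl 1 le_rfl]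
        split_ifs <;> omega
      have f5 : (W1pre k (k-2)).count (2*(1+1)) = k-2 := by
        rw [countW1pre k hk (k-2) le_rfl (1+1) (by omega)]
        split_ifs <;> omega
      simp only [List.count_append, List.count_singleton', List.count_replicate, beq_iff_eq]
      rw [f4, f5, hA1 _ (by omega), hA1 _ (by omega)]
      split_ifs <;> omega

lemma lat1 (k : ℕ) (hk : 5 ≤ k) :
    IsLatticeWord (W1pre k (k-2) ++ A1pre k (k-2)) := by
  apply isLatticeWord_of_latFrom
  apply latFrom_append
  · show LatFrom [] ((range (k-2)).flatMap (B1 k))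
    apply latFrom_flatMap
    intro j hj
    rw [List.nil_append]
    exact latW1block k j hk hj
  · rw [List.nil_append]
    show LatFrom (W1pre k (k-2)) ((range (k-2)).flatMap (A1 k))
    apply latFrom_flatMap
    intro j hj
    exact latA1block k j hk hj

lemma latW2block (k j : ℕ) (hk : 5 ≤ k) (hj : j < k-2) :
    LatFrom (W2pre k j) (B2 k j) := by
  rcases Nat.eq_zero_or_pos j with rfl | hj1
  · show LatFrom _ (replicate (k-2) 2 ++ [1])
    refine latFrom_append (latFrom_replicate' ?_) (latFrom_single' ?_)
    · intro t i ht hi hv; exfalso; omega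
    · intro i hi hv; exfalso; omega
  · rcases le_or_gt j (k-4) with hc | hc
    · rw [B2mid k j hj1 hc, show ([2*j+1, 2*j] : List ℕ) = [2*j+1] ++ [2*j] by rfl,
        ← List.append_assoc]
      refine latFrom_append (latFrom_append (latFrom_replicate' ?_) (latFrom_single' ?_))
        (latFrom_single' ?_)
      · intro t i ht hi hv
        have hieq : i = j := by omega
        subst hieq
        have d1 : (W2pre k i).count (2*i) = if i = 1 then k-2 else k-2-i := by
          rw [countW2pre k hk i (by omega) i (by omega)]
          split_ifs <;> omega
        have d2 : (W2pre k i).count (2*(i+1)) = 0 := by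
          rw [countW2pre k hk i (by omega) (i+1) (by omega)]
          split_ifs <;> omega
        rw [d1, d2]
        split_ifs <;> omega
      · intro i hi hv
        have hieq : i = j := by omega
        subst hieq
        have d1 : (W2pre k i).count (2*i) = if i = 1 then k-2 else k-2-i := by
          rw [countW2pre k hk i (by omega) i (by omega)]
          split_ifs <;> omega
        have d2 : (W2pre k i).count (2*(i+1)) = 0 := by
          rw [countW2pre k hk i (by omega) (i+1) (by omega)]
          split_ifs <;> omega
        simp only [List.count_append, List.count_replicate, beq_iff_eq]
        rw [d1, d2]
        split_ifs <;> omega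
      · intro i hi hv
        have h2 : 2 ≤ j := by omega
        have hieq : i = j - 1 := by omega
        subst hieq
        have d3 : (W2pre k j).count (2*(j-1)) = if j = 2 then k-1 else k-j := by
          rw [countW2pre k hk j (by omega) (j-1) (by omega)]
          split_ifs <;> omega
        have d4 : (W2pre k j).count (2*(j-1+1)) = k-2-j := by
          rw [countW2pre k hk j (by omega) (j-1+1) (by omega)]
          split_ifs <;> omega
        simp only [List.count_append, List.count_replicate, List.count_singleton',
          beq_iff_eq]
        rw [d3, d4]
        split_ifs <;> omega
    · have hj3 : j = k-3 := by omega
      subst hj3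
      rw [B2top k hk]
      refine latFrom_append (latFrom_replicate' ?_) (latFrom_single' ?_)
      · intro t i ht hi hv
        have hieq : i = k-3 := by omega
        subst hieq
        have e1 : (W2pre k (k-3)).count (2*(k-3)) = 1 := by
          rw [countW2pre k hk (k-3) (by omega) (k-3) (by omega)]
          split_ifs <;> omega
        have e2 : (W2pre k (k-3)).count (2*(k-3+1)) = 0 := by
          rw [countW2pre k hk (k-3) (by omega) (k-3+1) (by omega)]
          split_ifs <;> omega
        rw [e1, e2]
        split_ifs <;> omega
      · intro i hi hv
        have hieq : i = k-4 := by omega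
        subst hieq
        have e3 : (W2pre k (k-3)).count (2*(k-4)) = if k-4 = 1 then k-1 else 3 := by
          rw [countW2pre k hk (k-3) (by omega) (k-4) (by omega)]
          split_ifs <;> omega
        have e4 : (W2pre k (k-3)).count (2*(k-4+1)) = 1 := by
          rw [countW2pre k hk (k-3) (by omega) (k-4+1) (by omega)]
          split_ifs <;> omega
        simp only [List.count_append, List.count_replicate, beq_iff_eq]
        rw [e3, e4]
        split_ifs <;> omega

lemma latA2block (k j : ℕ) (hk : 5 ≤ k) (hj : j < k-2) :
    LatFrom (W2pre k (k-2) ++ A2pre k j) (A2 k j) := by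
  have hG : ∀ i, 1 ≤ i → ∀ v : ℕ,
      ((if i = 1 then k-1 else if i ≤ k-3 then k-1-i else if i = k-2 then 1 else 0) = v) →
      (W2pre k (k-2)).count (2*i) = v := by
    intro i hi v hv
    rw [countW2pre k hk (k-2) le_rfl i hi]
    split_ifs at hv ⊢ <;> omega
  rcases Nat.eq_zero_or_pos j with rfl | hj1
  · rw [A2block0 k hk, show ((2*(k-3)+1) :: [2*(k-3)+3] : List ℕ)
      = [2*(k-3)+1] ++ [2*(k-3)+3] by rfl]
    have hA0 : ∀ i, 1 ≤ i → (A2pre k 0).count (2*i) = 0 := by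
      intro i hi
      rw [countA2pre k hk 0 (by omega) i hi]
      split_ifs <;> omega
    refine latFrom_append (latFrom_single' ?_) (latFrom_single' ?_)
    · intro i hi hv
      have hieq : i = k-3 := by omega
      subst hieq
      simp only [List.count_append]
      rw [hG (k-3) (by omega) 2 (by split_ifs <;> omega),
        hG (k-3+1) (by omega) 1 (by split_ifs <;> omega),
        hA0 _ (by omega), hA0 _ (by omega)]
      omega
    · intro i hi hv
      have hieq : i = k-2 := by omega
      subst hieq
      simp only [List.count_append, List.count_singleton', beq_iff_eq]
      rw [hG (k-2) (by omega) 1 (by split_ifs <;> omega),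
        hG (k-2+1) (by omega) 0 (by split_ifs <;> omega),
        hA0 _ (by omega), hA0 _ (by omega)]
      split_ifs <;> omega
  · rcases le_or_gt j (k-4) with hc | hc
    · rw [A2blockPos k j hk hj1 hc, ← List.singleton_append,
        show ((2*(k-3-j)+2) :: replicate (k-3-(k-3-j)) (2*(k-3-j)+3) : List ℕ)
          = [2*(k-3-j)+2] ++ replicate (k-3-(k-3-j)) (2*(k-3-j)+3) by rfl,
        ← List.append_assoc]
      have hA : ∀ i, 1 ≤ i → ∀ v : ℕ,
          ((if 2 ≤ i ∧ i ≤ k-3 ∧ k-2-i < j then 1 else 0) = v) →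
          (A2pre k j).count (2*i) = v := by
        intro i hi v hv
        rw [countA2pre k hk j (by omega) i hi]
        split_ifs at hv ⊢ <;> omega
      refine latFrom_append (latFrom_append (latFrom_single' ?_) (latFrom_single' ?_))
        (latFrom_replicate' ?_)
      · intro i hi hv
        have hieq : i = k-3-j := by omega
        subst hieq
        simp only [List.count_append]
        rw [hG (k-3-j) (by omega) (if j = k-4 then k-1 else j+2) (by split_ifs <;> omega),
          hG (k-3-j+1) (by omega) (j+1) (by split_ifs <;> omega),
          hA _ (by omega) 0 (by split_ifs <;> omega),
          hA _ (by omega) 0 (by split_ifs <;> omega)]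
        split_ifs <;> omega
      · intro i hi hv
        have hieq : i = k-3-j := by omega
        subst hieq
        simp only [List.count_append, List.count_singleton', beq_iff_eq]
        rw [hG (k-3-j) (by omega) (if j = k-4 then k-1 else j+2) (by split_ifs <;> omega),
          hG (k-3-j+1) (by omega) (j+1) (by split_ifs <;> omega),
          hA _ (by omega) 0 (by split_ifs <;> omega),
          hA _ (by omega) 0 (by split_ifs <;> omega)]
        split_ifs <;> omega
      · intro t i ht hi hv
        have hieq : i = k-3-j+1 := by omega
        subst hieq
        simp only [List.count_append, List.count_singleton', beq_iff_eq]
        rw [hG (k-3-j+1) (by omega) (j+1) (by split_ifs <;> omega),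
          hG (k-3-j+1+1) (by omega) (if j = 1 then 1 else j) (by split_ifs <;> omega),
          hA _ (by omega) 0 (by split_ifs <;> omega),
          hA _ (by omega) (if j = 1 then 0 else 1) (by split_ifs <;> omega)]
        split_ifs <;> omega
    · have hj3 : j = k-3 := by omega
      subst hj3
      rw [A2blockTop k hk, ← List.singleton_append]
      have hA : ∀ i, 1 ≤ i → ∀ v : ℕ,
          ((if 2 ≤ i ∧ i ≤ k-3 ∧ k-2-i < k-3 then 1 else 0) = v) →
          (A2pre k (k-3)).count (2*i) = v := by
        intro i hi v hv
        rw [countA2pre k hk (k-3) (by omega) i hi]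
        split_ifs at hv ⊢ <;> omega
      refine latFrom_append (latFrom_single' ?_) (latFrom_replicate' ?_)
      · intro i hi hv; exfalso; omega
      · intro t i ht hi hv
        have hieq : i = 1 := by omega
        subst hieq
        simp only [List.count_append, List.count_singleton', beq_iff_eq]
        rw [hG 1 le_rfl (k-1) (by split_ifs <;> omega),
          hG (1+1) (by omega) (k-3) (by split_ifs <;> omega),
          hA 1 le_rfl 0 (by split_ifs <;> omega),
          hA (1+1) (by omega) 1 (by split_ifs <;> omega)]
        split_ifs <;> omega

lemma lat2 (k : ℕ) (hk : 5 ≤ k) :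
    IsLatticeWord (W2pre k (k-2) ++ A2pre k (k-2)) := by
  apply isLatticeWord_of_latFrom
  apply latFrom_append
  · show LatFrom [] ((range (k-2)).flatMap (B2 k))
    apply latFrom_flatMap
    intro j hj
    rw [List.nil_append]
    exact latW2block k j hk hj
  · rw [List.nil_append]
    show LatFrom (W2pre k (k-2)) ((range (k-2)).flatMap (A2 k))
    apply latFrom_flatMap
    intro j hj
    exact latA2block k j hk hj


def muL (k : ℕ) : List ℕ := (List.range (k-2)).map fun i => k-1-i
def nuL (k : ℕ) : List ℕ := k :: (((List.range (k-4)).map fun i => k-2-i) ++ [1])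

def TabA (k : ℕ) : ℕ × ℕ → ℕ := fun p =>
  if p.1 < k-2 ∧ p.2 < k-1-p.1 then
    if p.1 = 0 then (if p.2 = 0 then 1 else 2)
    else if p.2 = 0 then 2*p.1 else 2*p.1+2
  else 0

def TabB (k : ℕ) : ℕ × ℕ → ℕ := fun p =>
  if p.1 < k-2 ∧ p.2 < k-1-p.1 then
    if p.1 = 0 then (if p.2 = 0 then 1 else 2)
    else if p.2 = 0 then 2*p.1
    else if p.2 = 1 ∧ p.1 ≤ k-4 then 2*p.1+1 else 2*p.1+2
  else 0

lemma muL_length (k : ℕ) : (muL k).length = k-2 := by simp [muL]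

lemma muget (k r : ℕ) : (muL k).getD r 0 = if r < k-2 then k-1-r else 0 := by
  rw [List.getD_eq_getElem?_getD, muL, List.getElem?_map]
  rcases lt_or_ge r (k-2) with h | h
  · rw [List.getElem?_range h, if_pos h]
    rfl
  · rw [List.getElem?_eq_none (by simpa using h), if_neg (by omega)]
    rfl

lemma nuget (k i : ℕ) (hk : 5 ≤ k) (hi : 1 ≤ i) :
    (nuL k).getD (i-1) 0
      = if i = 1 then k else if i ≤ k-3 then k-i else if i = k-2 then 1 else 0 := by
  rcases Nat.eq_or_lt_of_le hi with h1 | h2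
  · rw [← h1]
    simp [nuL]
  · have h3 : i - 1 = (i-2) + 1 := by omega
    rw [nuL, h3, List.getD_cons_succ, List.getD_eq_getElem?_getD]
    rcases lt_or_ge (i-2) (k-4) with h | h
    · rw [List.getElem?_append_left (by simpa using h), List.getElem?_map,
        List.getElem?_range h]
      simp only [Option.map_some, Option.getD_some]
      split_ifs <;> omega
    · rw [List.getElem?_append_right (by simpa using h)]
      have hlen : (List.map (fun i => k-2-i) (List.range (k-4))).length = k-4 := by simp
      rw [hlen]
      rcases eq_or_lt_of_le h with he | hlt
      · rw [show i-2-(k-4) = 0 by omega]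
        simp only [List.getElem?_cons_zero, Option.getD_some]
        split_ifs <;> omega
      · rw [List.getElem?_eq_none (by simp; omega)]
        simp only [Option.getD_none]
        split_ifs <;> omega

lemma inDiag (k : ℕ) (p : ℕ × ℕ) :
    InDiagram ((muL k).length) (fun _ => 0) (fun r => (muL k).getD r 0) p
      ↔ (p.1 < k-2 ∧ p.2 < k-1-p.1) := by
  unfold InDiagram
  rw [muL_length]
  show p.1 < k-2 ∧ 0 ≤ p.2 ∧ p.2 < (muL k).getD p.1 0 ↔ _
  rw [muget]
  constructor
  · rintro ⟨h1, _, h3⟩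
    rw [if_pos h1] at h3
    exact ⟨h1, h3⟩
  · rintro ⟨h1, h2⟩
    exact ⟨h1, Nat.zero_le _, by rw [if_pos h1]; exact h2⟩

lemma TabA_eq (k r c : ℕ) (h1 : r < k-2) (h2 : c < k-1-r) :
    TabA k (r, c) = if r = 0 then (if c = 0 then 1 else 2)
      else if c = 0 then 2*r else 2*r+2 := by
  unfold TabA
  rw [if_pos ⟨h1, h2⟩]

lemma TabB_eq (k r c : ℕ) (h1 : r < k-2) (h2 : c < k-1-r) :
    TabB k (r, c) = if r = 0 then (if c = 0 then 1 else 2)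
      else if c = 0 then 2*r
      else if c = 1 ∧ r ≤ k-4 then 2*r+1 else 2*r+2 := by
  unfold TabB
  rw [if_pos ⟨h1, h2⟩]

lemma rwA (k : ℕ) (hk : 5 ≤ k) :
    readingWord ((muL k).length) (fun _ => 0) (fun r => (muL k).getD r 0) (TabA k)
      = W1pre k (k-2) := by
  unfold readingWord W1pre
  rw [muL_length]
  apply _root_.flatMap_congr
  intro r hr
  rw [List.mem_range] at hr
  beta_reduce
  rw [muget, if_pos hr, Nat.sub_zero]
  rcases Nat.eq_zero_or_pos r with rfl | hr1
  · have hconst : ∀ c, 1 ≤ c → c < (k-2) + 1 → TabA k (0, c) = 2 := by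
      intro c hc1 hc2
      rw [TabA_eq k 0 c (by omega) (by omega), if_pos rfl, if_neg (by omega)]
    rw [show k-1-0 = (k-2)+1 by omega, revRowMap _ 2 (k-2) hconst]
    have h00 : TabA k (0, 0) = 1 := by
      rw [TabA_eq k 0 0 (by omega) (by omega)]; simp
    rw [h00]
    unfold B1
    rw [if_pos rfl]
  · have hconst : ∀ c, 1 ≤ c → c < (k-2-r) + 1 → TabA k (r, c) = 2*r+2 := by
      intro c hc1 hc2
      rw [TabA_eq k r c (by omega) (by omega), if_neg (by omega), if_neg (by omega)]
    rw [show k-1-r = (k-2-r)+1 by omega, revRowMap _ (2*r+2) (k-2-r) hconst]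
    have h0 : TabA k (r, 0) = 2*r := by
      rw [TabA_eq k r 0 (by omega) (by omega), if_neg (by omega), if_pos rfl]
    rw [h0, B1pos k r hr1]

lemma rwB (k : ℕ) (hk : 5 ≤ k) :
    readingWord ((muL k).length) (fun _ => 0) (fun r => (muL k).getD r 0) (TabB k)
      = W2pre k (k-2) := by
  unfold readingWord W2pre
  rw [muL_length]
  apply _root_.flatMap_congr
  intro r hr
  rw [List.mem_range] at hr
  beta_reduce
  rw [muget, if_pos hr, Nat.sub_zero]
  rcases Nat.eq_zero_or_pos r with rfl | hr1
  · have hconst : ∀ c, 1 ≤ c → c < (k-2) + 1 → TabB k (0, c) = 2 := by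
      intro c hc1 hc2
      rw [TabB_eq k 0 c (by omega) (by omega), if_pos rfl, if_neg (by omega)]
    rw [show k-1-0 = (k-2)+1 by omega, revRowMap _ 2 (k-2) hconst]
    have h00 : TabB k (0, 0) = 1 := by
      rw [TabB_eq k 0 0 (by omega) (by omega)]; simp
    rw [h00]
    unfold B2
    rw [if_pos rfl]
  · rcases le_or_gt r (k-4) with hc | hc
    · have hconst : ∀ c, 2 ≤ c → c < (k-3-r) + 2 → TabB k (r, c) = 2*r+2 := by
        intro c hc1 hc2
        rw [TabB_eq k r c (by omega) (by omega), if_neg (by omega), if_neg (by omega),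
          if_neg (by omega)]
      rw [show k-1-r = (k-3-r)+2 by omega, revRowMap2 _ (2*r+2) (k-3-r) hconst]
      have h1 : TabB k (r, 1) = 2*r+1 := by
        rw [TabB_eq k r 1 (by omega) (by omega), if_neg (by omega), if_neg (by omega),
          if_pos ⟨rfl, hc⟩]
      have h0 : TabB k (r, 0) = 2*r := by
        rw [TabB_eq k r 0 (by omega) (by omega), if_neg (by omega), if_pos rfl]
      rw [h1, h0, B2mid k r hr1 hc]
    · have hr3 : r = k-3 := by omega
      subst hr3
      have hconst : ∀ c, 1 ≤ c → c < 1 + 1 → TabB k (k-3, c) = 2*(k-3)+2 := by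
        intro c hc1 hc2
        rw [TabB_eq k (k-3) c (by omega) (by omega), if_neg (by omega),
          if_neg (by omega), if_neg (by omega)]
      rw [show k-1-(k-3) = 1+1 by omega, revRowMap _ (2*(k-3)+2) 1 hconst]
      have h0 : TabB k (k-3, 0) = 2*(k-3) := by
        rw [TabB_eq k (k-3) 0 (by omega) (by omega), if_neg (by omega), if_pos rfl]
      rw [h0, B2top k hk]

lemma awA (k : ℕ) (hk : 5 ≤ k) :
    augWord ((muL k).length) (fun _ => 0) (fun r => (muL k).getD r 0) (TabA k)
      = A1pre k (k-2) := by
  unfold augWord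
  rw [rwA k hk]
  unfold W1pre A1pre
  rw [reverse_flatMap_range, List.map_flatMap]
  apply _root_.flatMap_congr
  intro j hj
  unfold A1
  rw [show k-2-1-j = k-3-j by omega]

lemma awB (k : ℕ) (hk : 5 ≤ k) :
    augWord ((muL k).length) (fun _ => 0) (fun r => (muL k).getD r 0) (TabB k)
      = A2pre k (k-2) := by
  unfold augWord
  rw [rwB k hk]
  unfold W2pre A2pre
  rw [reverse_flatMap_range, List.map_flatMap]
  apply _root_.flatMap_congr
  intro j hj
  unfold A2
  rw [show k-2-1-j = k-3-j by omega]


lemma inDiag' (k r c : ℕ) :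
    InDiagram ((muL k).length) (fun _ => 0) (fun r => (muL k).getD r 0) (r, c)
      ↔ (r < k-2 ∧ c < k-1-r) := inDiag k (r, c)

lemma memB1_lb (k r x : ℕ) (hr : 1 ≤ r) (hx : x ∈ B1 k r) : 2*r ≤ x := by
  rw [B1pos k r hr] at hx
  simp only [List.mem_append, List.mem_replicate, List.mem_singleton] at hx
  omega

lemma memB2_lb (k r x : ℕ) (hr : 1 ≤ r) (hx : x ∈ B2 k r) : 2*r ≤ x := by
  unfold B2 at hx
  rw [if_neg (by omega)] at hx
  by_cases hc : r ≤ k-4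
  · rw [if_pos hc] at hx
    simp only [List.mem_append, List.mem_replicate, List.mem_cons,
      List.mem_singleton, List.not_mem_nil, or_false] at hx
    omega
  · rw [if_neg hc] at hx
    simp only [List.mem_append, List.mem_replicate, List.mem_singleton] at hx
    omega

lemma memB2_self (k r : ℕ) (hk : 5 ≤ k) (hr : 1 ≤ r) (hr2 : r < k-2) :
    2*r ∈ B2 k r := by
  rcases le_or_gt r (k-4) with hc | hc
  · rw [B2mid k r hr hc]
    simp
  · have h3 : r = k-3 := by omega
    subst h3
    rw [B2top k hk]
    simp

lemma memB1_self (k r : ℕ) (hr : 1 ≤ r) : 2*r ∈ B1 k r := by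
  rw [B1pos k r hr]; simp

lemma memW1odd (k x : ℕ) (hk : 5 ≤ k) (hx : x ∈ W1pre k (k-2)) (hodd : x % 2 = 1) :
    x = 1 := by
  unfold W1pre at hx
  rw [List.mem_flatMap] at hx
  obtain ⟨r, hr, hxB⟩ := hx
  rcases Nat.eq_zero_or_pos r with rfl | hr1
  · unfold B1 at hxB
    rw [if_pos rfl] at hxB
    simp only [List.mem_append, List.mem_replicate, List.mem_singleton] at hxB
    omega
  · rw [B1pos k r hr1] at hxB
    simp only [List.mem_append, List.mem_replicate, List.mem_singleton] at hxB
    omega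

lemma memW2odd (k x : ℕ) (hk : 5 ≤ k) (hx : x ∈ W2pre k (k-2)) (hodd : x % 2 = 1) :
    x = 1 ∨ ∃ r, 1 ≤ r ∧ r ≤ k-4 ∧ x = 2*r+1 := by
  unfold W2pre at hx
  rw [List.mem_flatMap] at hx
  obtain ⟨r, hr, hxB⟩ := hx
  rw [List.mem_range] at hr
  rcases Nat.eq_zero_or_pos r with rfl | hr1
  · unfold B2 at hxB
    rw [if_pos rfl] at hxB
    simp only [List.mem_append, List.mem_replicate, List.mem_singleton] at hxB
    omega
  · rcases le_or_gt r (k-4) with hc | hc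
    · rw [B2mid k r hr1 hc] at hxB
      simp only [List.mem_append, List.mem_replicate, List.mem_cons,
        List.mem_singleton, List.not_mem_nil, or_false] at hxB
      right
      exact ⟨r, hr1, hc, by omega⟩
    · have h3 : r = k-3 := by omega
      subst h3
      rw [B2top k hk] at hxB
      simp only [List.mem_append, List.mem_replicate, List.mem_singleton] at hxB
      omega

lemma later1 (k : ℕ) (hk : 5 ≤ k) :
    ∀ i, 1 ≤ i → ∀ p : ℕ, (W1pre k (k-2))[p]? = some (2*i-1) →
      ∃ q : ℕ, p < q ∧ (W1pre k (k-2))[q]? = some (2*i) := by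
  intro i hi p hp
  have hmem : (2*i-1) ∈ W1pre k (k-2) := by
    obtain ⟨h, he⟩ := List.getElem?_eq_some_iff.mp hp
    exact he ▸ List.getElem_mem h
  have h1 : 2*i-1 = 1 := memW1odd k _ hk hmem (by omega)
  have hi1 : i = 1 := by omega
  subst hi1
  have hsplit : W1pre k (k-2) = (range 1).flatMap (B1 k)
      ++ (range (k-2-1)).flatMap (fun t => B1 k (1+t)) :=
    flatMap_range_split (B1 k) (by omega)
  rw [hsplit] at hp ⊢
  refine exists_later ?_ ?_ p hp
  · intro hm
    rw [List.mem_flatMap] at hm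
    obtain ⟨t, _, hxB⟩ := hm
    have := memB1_lb k (1+t) _ (by omega) hxB
    omega
  · rw [List.mem_flatMap]
    refine ⟨0, by simp; omega, ?_⟩
    have h2 : (2*1 : ℕ) = 2*(1+0) := by omega
    rw [h2]
    exact memB1_self k (1+0) (by omega)

lemma later2 (k : ℕ) (hk : 5 ≤ k) :
    ∀ i, 1 ≤ i → ∀ p : ℕ, (W2pre k (k-2))[p]? = some (2*i-1) →
      ∃ q : ℕ, p < q ∧ (W2pre k (k-2))[q]? = some (2*i) := by
  intro i hi p hp
  have hmem : (2*i-1) ∈ W2pre k (k-2) := by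
    obtain ⟨h, he⟩ := List.getElem?_eq_some_iff.mp hp
    exact he ▸ List.getElem_mem h
  rcases memW2odd k _ hk hmem (by omega) with h1 | ⟨r, hr1, hr4, hx⟩
  · have hi1 : i = 1 := by omega
    subst hi1
    have hsplit : W2pre k (k-2) = (range 1).flatMap (B2 k)
        ++ (range (k-2-1)).flatMap (fun t => B2 k (1+t)) :=
      flatMap_range_split (B2 k) (by omega)
    rw [hsplit] at hp ⊢
    refine exists_later ?_ ?_ p hp
    · intro hm
      rw [List.mem_flatMap] at hm
      obtain ⟨t, _, hxB⟩ := hm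
      have := memB2_lb k (1+t) _ (by omega) hxB
      omega
    · rw [List.mem_flatMap]
      refine ⟨0, by simp; omega, ?_⟩
      have h2 : (2*1 : ℕ) = 2*(1+0) := by omega
      rw [h2]
      exact memB2_self k (1+0) hk (by omega) (by omega)
  · have hi1 : i = r+1 := by omega
    subst hi1
    have hsplit : W2pre k (k-2) = (range (r+1)).flatMap (B2 k)
        ++ (range (k-2-(r+1))).flatMap (fun t => B2 k (r+1+t)) :=
      flatMap_range_split (B2 k) (by omega)
    rw [hsplit] at hp ⊢
    refine exists_later ?_ ?_ p hp
    · intro hm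
      rw [List.mem_flatMap] at hm
      obtain ⟨t, _, hxB⟩ := hm
      have := memB2_lb k (r+1+t) _ (by omega) hxB
      omega
    · rw [List.mem_flatMap]
      refine ⟨0, by simp; omega, ?_⟩
      have h2 : (2*(r+1) : ℕ) = 2*(r+1+0) := by omega
      rw [h2]
      exact memB2_self k (r+1+0) hk (by omega) (by omega)

lemma amenA (k : ℕ) (hk : 5 ≤ k) :
    IsAmenable ((muL k).length) (fun _ => 0) (fun r => (muL k).getD r 0) (TabA k) := by
  refine ⟨?_, ?_, ?_, ?_, ?_, ?_, ?_, ?_⟩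
  · rintro ⟨r, c⟩ hp
    rw [inDiag'] at hp
    rw [TabA_eq k r c hp.1 hp.2]
    split_ifs <;> (try contradiction) <;> omega
  · rintro ⟨r, c⟩ hp
    rw [inDiag'] at hp
    show (if r < k-2 ∧ c < k-1-r then _ else 0) = 0
    rw [if_neg hp]
  · intro r c h1 h2
    rw [inDiag'] at h1 h2
    rw [TabA_eq k r c h1.1 h1.2, TabA_eq k r (c+1) h2.1 h2.2]
    split_ifs <;> (try contradiction) <;> omega
  · intro r c h1 h2
    rw [inDiag'] at h1 h2
    rw [TabA_eq k r c h1.1 h1.2, TabA_eq k (r+1) c h2.1 h2.2]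
    split_ifs <;> (try contradiction) <;> omega
  · intro r c1 c2 i hi hne h1 h2
    rw [inDiag'] at h1 h2
    rw [TabA_eq k r c1 h1.1 h1.2, TabA_eq k r c2 h2.1 h2.2]
    rintro ⟨ha, hb⟩
    split_ifs at ha hb <;> (try contradiction) <;> omega
  · intro r1 r2 c i hi hne h1 h2
    rw [inDiag'] at h1 h2
    rw [TabA_eq k r1 c h1.1 h1.2, TabA_eq k r2 c h2.1 h2.2]
    rintro ⟨ha, hb⟩
    split_ifs at ha hb <;> (try contradiction) <;> omega
  · rw [rwA k hk, awA k hk]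
    exact lat1 k hk
  · rw [rwA k hk]
    exact later1 k hk

lemma amenB (k : ℕ) (hk : 5 ≤ k) :
    IsAmenable ((muL k).length) (fun _ => 0) (fun r => (muL k).getD r 0) (TabB k) := by
  refine ⟨?_, ?_, ?_, ?_, ?_, ?_, ?_, ?_⟩
  · rintro ⟨r, c⟩ hp
    rw [inDiag'] at hp
    rw [TabB_eq k r c hp.1 hp.2]
    split_ifs <;> (try contradiction) <;> omega
  · rintro ⟨r, c⟩ hp
    rw [inDiag'] at hp
    show (if r < k-2 ∧ c < k-1-r then _ else 0) = 0
    rw [if_neg hp]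
  · intro r c h1 h2
    rw [inDiag'] at h1 h2
    rw [TabB_eq k r c h1.1 h1.2, TabB_eq k r (c+1) h2.1 h2.2]
    split_ifs <;> (try contradiction) <;> omega
  · intro r c h1 h2
    rw [inDiag'] at h1 h2
    rw [TabB_eq k r c h1.1 h1.2, TabB_eq k (r+1) c h2.1 h2.2]
    split_ifs <;> (try contradiction) <;> omega
  · intro r c1 c2 i hi hne h1 h2
    rw [inDiag'] at h1 h2
    rw [TabB_eq k r c1 h1.1 h1.2, TabB_eq k r c2 h2.1 h2.2]
    rintro ⟨ha, hb⟩
    split_ifs at ha hb <;> (try contradiction) <;> omega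
  · intro r1 r2 c i hi hne h1 h2
    rw [inDiag'] at h1 h2
    rw [TabB_eq k r1 c h1.1 h1.2, TabB_eq k r2 c h2.1 h2.2]
    rintro ⟨ha, hb⟩
    split_ifs at ha hb <;> (try contradiction) <;> omega
  · rw [rwB k hk, awB k hk]
    exact lat2 k hk
  · rw [rwB k hk]
    exact later2 k hk

lemma hasContA (k : ℕ) (hk : 5 ≤ k) :
    HasContent ((muL k).length) (fun _ => 0) (fun r => (muL k).getD r 0)
      (TabA k) (nuL k) := by
  intro i hi
  rw [rwA k hk]
  unfold contentAt
  rw [countW1pre k hk (k-2) le_rfl i hi,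
    countW1preOdd k hk (k-2) le_rfl (2*i-1) (by omega),
    nuget k i hk hi]
  split_ifs <;> omega

lemma hasContB (k : ℕ) (hk : 5 ≤ k) :
    HasContent ((muL k).length) (fun _ => 0) (fun r => (muL k).getD r 0)
      (TabB k) (nuL k) := by
  intro i hi
  rw [rwB k hk]
  unfold contentAt
  rw [countW2pre k hk (k-2) le_rfl i hi,
    countW2preOdd k hk (k-2) le_rfl (2*i-1) (by omega),
    nuget k i hk hi]
  split_ifs <;> omega

lemma TabA_ne_TabB (k : ℕ) (hk : 5 ≤ k) : TabA k ≠ TabB k := by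
  intro h
  have h11 := congrFun h (1, 1)
  rw [TabA_eq k 1 1 (by omega) (by omega), TabB_eq k 1 1 (by omega) (by omega)] at h11
  rw [if_neg (by omega), if_neg (by omega), if_neg (by omega), if_neg (by omega),
    if_pos ⟨rfl, by omega⟩] at h11
  omega

lemma nuL_length (k : ℕ) (hk : 5 ≤ k) : (nuL k).length = k-2 := by
  simp [nuL]
  omega

lemma finite_gSet (k : ℕ) (hk : 5 ≤ k) : (gSet (nuL k) (muL k)).Finite := by
  have hsub : gSet (nuL k) (muL k)
      ⊆ (fun f : (Fin (k-2) × Fin k) → Fin (2*(k-2)+1) =>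
          (fun p : ℕ × ℕ =>
            if h : p.1 < k-2 ∧ p.2 < k then (f (⟨p.1, h.1⟩, ⟨p.2, h.2⟩) : ℕ) else 0))
        '' Set.univ := by
    intro T hT
    obtain ⟨hAm, hCont⟩ := hT
    have hzero : ∀ p : ℕ × ℕ, ¬(p.1 < k-2 ∧ p.2 < k) → T p = 0 := by
      intro p hp
      apply hAm.2.1
      rw [inDiag]
      intro hd
      exact hp ⟨hd.1, by omega⟩
    have hbound : ∀ p : ℕ × ℕ, T p < 2*(k-2)+1 := by
      intro p
      by_cases hd : InDiagram ((muL k).length) (fun _ => 0)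
          (fun r => (muL k).getD r 0) p
      · have hpos : 1 ≤ T p := hAm.1 p hd
        have hd' := (inDiag k p).mp hd
        have hmem : T p ∈ readingWord ((muL k).length) (fun _ => 0)
            (fun r => (muL k).getD r 0) T := by
          unfold readingWord
          rw [List.mem_flatMap]
          refine ⟨p.1, by rw [List.mem_range, muL_length]; exact hd'.1, ?_⟩
          beta_reduce
          rw [List.mem_map]
          refine ⟨p.2, ?_, rfl⟩
          rw [List.mem_reverse, List.mem_range'_1]
          rw [muget, if_pos hd'.1]
          constructor
          · omega
          · omega
        set y := T p with hy
        set i := (y+1)/2 with hi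
        have hio : 1 ≤ i := by omega
        have hcase : y = 2*i ∨ y = 2*i-1 := by omega
        have hcountpos : 1 ≤ contentAt (readingWord ((muL k).length) (fun _ => 0)
            (fun r => (muL k).getD r 0) T) i := by
          unfold contentAt
          rcases hcase with hc | hc
          · have := List.count_pos_iff.mpr (hc ▸ hmem)
            omega
          · have := List.count_pos_iff.mpr (hc ▸ hmem)
            omega
        rw [hCont i hio] at hcountpos
        by_contra hbig
        have hilen : (nuL k).length ≤ i - 1 := by
          rw [nuL_length k hk]
          omega
        rw [List.getD_eq_default _ _ hilen] at hcountpos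
        omega
      · rw [hAm.2.1 p hd]
        omega
    refine ⟨fun q => ⟨T (q.1.1, q.2.1), hbound _⟩, Set.mem_univ _, ?_⟩
    funext p
    by_cases h : p.1 < k-2 ∧ p.2 < k
    · simp only [dif_pos h]
    · simp only [dif_neg h]
      exact (hzero p h).symm
  exact Set.Finite.subset (Set.Finite.image _ Set.finite_univ) hsub

lemma sortedMu (k : ℕ) (hk : 5 ≤ k) : (muL k).Pairwise (· > ·) := by
  unfold muL
  apply List.pairwise_iff_getElem.mpr
  intro i j hi hj hij
  simp only [List.getElem_map, List.getElem_range]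
  simp only [List.length_map, List.length_range] at hi hj
  omega

lemma posMu (k : ℕ) (hk : 5 ≤ k) : ∀ x ∈ muL k, 0 < x := by
  intro x hx
  unfold muL at hx
  rw [List.mem_map] at hx
  obtain ⟨i, hi, rfl⟩ := hx
  rw [List.mem_range] at hi
  omega

lemma sortedNu (k : ℕ) (hk : 5 ≤ k) : (nuL k).Pairwise (· > ·) := by
  unfold nuL
  rw [List.pairwise_cons]
  constructor
  · intro b hb
    simp only [List.mem_append, List.mem_map, List.mem_range, List.mem_singleton] at hb
    rcases hb with ⟨t, ht, rfl⟩ | rfl <;> omega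
  · show List.Pairwise _ _
    rw [List.pairwise_append]
    refine ⟨?_, by simp, ?_⟩
    · apply List.pairwise_iff_getElem.mpr
      intro i j hi hj hij
      simp only [List.getElem_map, List.getElem_range]
      simp only [List.length_map, List.length_range] at hi hj
      omega
    · intro a ha b hb
      simp only [List.mem_map, List.mem_range] at ha
      simp only [List.mem_singleton] at hb
      obtain ⟨t, ht, rfl⟩ := ha
      subst hb
      omega

lemma posNu (k : ℕ) (hk : 5 ≤ k) : ∀ x ∈ nuL k, 0 < x := by
  intro x hx
  unfold nuL at hx
  simp only [List.mem_cons, List.mem_append, List.mem_map, List.mem_range,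
    List.not_mem_nil, or_false] at hx
  rcases hx with rfl | ⟨t, ht, rfl⟩ | rfl <;> omega

lemma listsum_bridge (n : ℕ) (f : ℕ → ℕ) :
    ((List.range n).map f).sum = ∑ i ∈ Finset.range n, f i := by
  induction n with
  | zero => simp
  | succ n ih =>
      rw [List.range_succ, List.map_append, List.sum_append, Finset.sum_range_succ, ih]
      simp

lemma sumMu (k : ℕ) (hk : 5 ≤ k) : (muL k).sum = k*(k-1)/2 - 1 := by
  obtain ⟨m, rfl⟩ : ∃ m, k = m+5 := ⟨k-5, by omega⟩
  unfold muL
  rw [show m+5-2 = m+3 by omega, listsum_bridge]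
  have h1 : ∑ i ∈ Finset.range (m+3), (m+5-1-i) = ∑ i ∈ Finset.range (m+3), (i+2) := by
    rw [← Finset.sum_range_reflect]
    apply Finset.sum_congr rfl
    intro i hi
    rw [Finset.mem_range] at hi
    omega
  rw [h1, Finset.sum_add_distrib, Finset.sum_const, Finset.card_range, smul_eq_mul]
  have hid := Finset.sum_range_id_mul_two (m+3)
  have hq1 : (m+3)*(m+3-1) = m*m+5*m+6 := by
    rw [show m+3-1 = m+2 by omega]; ring
  have hq2 : (m+5)*(m+5-1) = m*m+9*m+20 := by
    rw [show m+5-1 = m+4 by omega]; ring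
  omega

lemma sumNu (k : ℕ) (hk : 5 ≤ k) : (nuL k).sum = k*(k-1)/2 - 1 := by
  obtain ⟨m, rfl⟩ : ∃ m, k = m+5 := ⟨k-5, by omega⟩
  unfold nuL
  rw [List.sum_cons, List.sum_append, List.sum_singleton,
    show m+5-4 = m+1 by omega, listsum_bridge]
  have h1 : ∑ i ∈ Finset.range (m+1), (m+5-2-i) = ∑ i ∈ Finset.range (m+1), (i+3) := by
    rw [← Finset.sum_range_reflect]
    apply Finset.sum_congr rfl
    intro i hi
    rw [Finset.mem_range] at hi
    omega
  rw [h1, Finset.sum_add_distrib, Finset.sum_const, Finset.card_range, smul_eq_mul]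
  have hid := Finset.sum_range_id_mul_two (m+1)
  have hq1 : (m+1)*(m+1-1) = m*m+m := by
    rw [show m+1-1 = m by omega]; ring
  have hq2 : (m+5)*(m+5-1) = m*m+9*m+20 := by
    rw [show m+5-1 = m+4 by omega]; ring
  omega

lemma sortedMu' (k : ℕ) (hk : 5 ≤ k) : (muL k).Pairwise (· ≥ ·) :=
  (sortedMu k hk).imp (fun h => le_of_lt h)


/-- For every `k ≥ 5`, with `ν = (k, k-2, k-3, …, 4, 3, 1)` and
`μ = (k-1, k-2, …, 4, 3, 2)` (both partitions of `k(k-1)/2 - 1`, `ν` strict),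
there are at least two amenable tableaux of shape `μ` and content `ν`. -/
theorem gCoeff_two_gaps (k : ℕ) (hk : 5 ≤ k) :
    IsStrictPartitionList
        (k :: (((List.range (k - 4)).map fun i => k - 2 - i) ++ [1])) ∧
    IsPartitionList ((List.range (k - 2)).map fun i => k - 1 - i) ∧
    (k :: (((List.range (k - 4)).map fun i => k - 2 - i) ++ [1])).sum
        = k * (k - 1) / 2 - 1 ∧
    ((List.range (k - 2)).map fun i => k - 1 - i).sum = k * (k - 1) / 2 - 1 ∧
    2 ≤ gCoeff (k :: (((List.range (k - 4)).map fun i => k - 2 - i) ++ [1]))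
          ((List.range (k - 2)).map fun i => k - 1 - i) := by
  refine ⟨⟨sortedNu k hk, posNu k hk⟩, ⟨sortedMu' k hk, posMu k hk⟩,
    sumNu k hk, sumMu k hk, ?_⟩
  have hfin := finite_gSet k hk
  have hmemA : TabA k ∈ gSet (nuL k) (muL k) := ⟨amenA k hk, hasContA k hk⟩
  have hmemB : TabB k ∈ gSet (nuL k) (muL k) := ⟨amenB k hk, hasContB k hk⟩
  have h2 := (Set.one_lt_ncard hfin).mpr
    ⟨TabA k, hmemA, TabB k, hmemB, TabA_ne_TabB k hk⟩
  show 2 ≤ gCoeff (nuL k) (muL k)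
  unfold gCoeff
  omega
end
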